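/- arXiv:2510.11293 — 6 statements merged into one kernel-verified Lean document; each statement's English description precedes it below -/
import Mathlib

section
/- If (X, <) is a well-ordered set, then the Dershowitz–Manna ordering on finite multisets over X is well-founded, where A <_DM B iff there exists x in X with multiplicity of x in A strictly less than in B, and for all y > x the multiplicities of y in A and B agree. -/
/-- The Dershowitz–Manna ordering on finite multisets over a well-ordered set
`X` is well-founded: `A <_DM B` iff there is `x` with `mult_A(x) < mult_B(x)`
and `mult_A(y) = mult_B(y)` for all `y > x`. -/
theorem dershowitz_manna_wellFounded (X : Type*) [LinearOrder X] [DecidableEq X]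
    [WellFoundedLT X] :
    WellFounded (fun A B : Multiset X =>
      ∃ x : X, A.count x < B.count x ∧ ∀ y : X, x < y → A.count y = B.count y) := by
  have hwf : WellFounded (Finsupp.Lex (fun a b : X => b < a) (· < · : ℕ → ℕ → Prop)) := by
    have : IsTrichotomous X (fun a b : X => b < a) := IsTrichotomous.swap _
    exact Finsupp.Lex.wellFounded' (fun n => Nat.not_lt_zero n) Nat.lt_wfRel.wf
      (wellFounded_lt : WellFounded (· < · : X → X → Prop))
  have := InvImage.wf (fun A : Multiset X => A.toFinsupp) hwf
  refine Subrelation.wf ?_ this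
  rintro A B ⟨x, hx, hy⟩
  refine ⟨x, fun j hj => ?_, ?_⟩ <;> simp only [Multiset.toFinsupp_apply]
  · exact hy j hj
  · exact hx
end

section
/- For a finite set Φ of modal μ-calculus formulas, the closure Clos(Φ), defined as the least superset of Φ closed under the trace relation, is finite. -/
/-- Formulas of the modal μ-calculus, with propositions, negated propositions
and variables indexed by natural numbers. -/
inductive Formula : Type
  | prop : ℕ → Formula
  | nprop : ℕ → Formula
  | var : ℕ → Formula
  | or : Formula → Formula → Formula
  | and : Formula → Formula → Formula
  | dia : Formula → Formula
  | box : Formula → Formula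
  | mu : ℕ → Formula → Formula
  | nu : ℕ → Formula → Formula

/-- Negation of a modal μ-calculus formula. -/
def Formula.neg : Formula → Formula
  | .prop p => .nprop p
  | .nprop p => .prop p
  | .var x => .var x
  | .or φ ψ => .and φ.neg ψ.neg
  | .and φ ψ => .or φ.neg ψ.neg
  | .dia φ => .box φ.neg
  | .box φ => .dia φ.neg
  | .mu x φ => .nu x φ.neg
  | .nu x φ => .mu x φ.neg

/-- `x` occurs free in a formula. -/
def Formula.FreeIn (x : ℕ) : Formula → Prop
  | .prop _ => False
  | .nprop _ => False
  | .var y => y = x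
  | .or φ ψ => φ.FreeIn x ∨ ψ.FreeIn x
  | .and φ ψ => φ.FreeIn x ∨ ψ.FreeIn x
  | .dia φ => φ.FreeIn x
  | .box φ => φ.FreeIn x
  | .mu y φ => y ≠ x ∧ φ.FreeIn x
  | .nu y φ => y ≠ x ∧ φ.FreeIn x

/-- `x` has a free occurrence lying within the scope of a ν-operator. -/
def Formula.FreeUnderNu (x : ℕ) : Formula → Prop
  | .prop _ => False
  | .nprop _ => False
  | .var _ => False
  | .or φ ψ => φ.FreeUnderNu x ∨ ψ.FreeUnderNu x
  | .and φ ψ => φ.FreeUnderNu x ∨ ψ.FreeUnderNu x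
  | .dia φ => φ.FreeUnderNu x
  | .box φ => φ.FreeUnderNu x
  | .mu y φ => y ≠ x ∧ φ.FreeUnderNu x
  | .nu y φ => y ≠ x ∧ φ.FreeIn x

/-- `x` has a free occurrence lying within the scope of a μ-operator. -/
def Formula.FreeUnderMu (x : ℕ) : Formula → Prop
  | .prop _ => False
  | .nprop _ => False
  | .var _ => False
  | .or φ ψ => φ.FreeUnderMu x ∨ ψ.FreeUnderMu x
  | .and φ ψ => φ.FreeUnderMu x ∨ ψ.FreeUnderMu x
  | .dia φ => φ.FreeUnderMu x
  | .box φ => φ.FreeUnderMu x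
  | .mu y φ => y ≠ x ∧ φ.FreeIn x
  | .nu y φ => y ≠ x ∧ φ.FreeUnderMu x

/-- The (syntactic) subformula relation. -/
inductive Subformula : Formula → Formula → Prop
  | refl (φ) : Subformula φ φ
  | orL {χ φ ψ} : Subformula χ φ → Subformula χ (.or φ ψ)
  | orR {χ φ ψ} : Subformula χ ψ → Subformula χ (.or φ ψ)
  | andL {χ φ ψ} : Subformula χ φ → Subformula χ (.and φ ψ)
  | andR {χ φ ψ} : Subformula χ ψ → Subformula χ (.and φ ψ)
  | dia {χ φ} : Subformula χ φ → Subformula χ (.dia φ)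
  | box {χ φ} : Subformula χ φ → Subformula χ (.box φ)
  | mu {χ φ} (x) : Subformula χ φ → Subformula χ (.mu x φ)
  | nu {χ φ} (x) : Subformula χ φ → Subformula χ (.nu x φ)

/-- A formula is alternation-free if for every subformula `μx.ψ` no free
occurrence of `x` in `ψ` is in the scope of a ν-operator, and dually. -/
def AlternationFree (φ : Formula) : Prop :=
  (∀ x ψ, Subformula (.mu x ψ) φ → ¬ ψ.FreeUnderNu x) ∧
  (∀ x ψ, Subformula (.nu x ψ) φ → ¬ ψ.FreeUnderMu x)

/-- Substitution of `δ` for the free occurrences of the variable `x`. -/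
def Formula.subst (x : ℕ) (δ : Formula) : Formula → Formula
  | .prop p => .prop p
  | .nprop p => .nprop p
  | .var y => if y = x then δ else .var y
  | .or φ ψ => .or (Formula.subst x δ φ) (Formula.subst x δ ψ)
  | .and φ ψ => .and (Formula.subst x δ φ) (Formula.subst x δ ψ)
  | .dia φ => .dia (Formula.subst x δ φ)
  | .box φ => .box (Formula.subst x δ φ)
  | .mu y φ => if y = x then .mu y φ else .mu y (Formula.subst x δ φ)
  | .nu y φ => if y = x then .nu y φ else .nu y (Formula.subst x δ φ)

/-- The trace-step relation: passing to a direct Boolean or modal subformula,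
or unfolding a fixpoint formula. -/
inductive TraceStep : Formula → Formula → Prop
  | orL (φ ψ) : TraceStep (.or φ ψ) φ
  | orR (φ ψ) : TraceStep (.or φ ψ) ψ
  | andL (φ ψ) : TraceStep (.and φ ψ) φ
  | andR (φ ψ) : TraceStep (.and φ ψ) ψ
  | dia (φ) : TraceStep (.dia φ) φ
  | box (φ) : TraceStep (.box φ) φ
  | mu (x φ) : TraceStep (.mu x φ) (Formula.subst x (.mu x φ) φ)
  | nu (x φ) : TraceStep (.nu x φ) (Formula.subst x (.nu x φ) φ)

/-- The trace relation: reflexive-transitive closure of the trace-step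
relation. -/
def Trace : Formula → Formula → Prop := Relation.ReflTransGen TraceStep

/-- A formula is closed if it has no free variables. -/
def Formula.Closed (φ : Formula) : Prop := ∀ x, ¬ φ.FreeIn x


deriving instance DecidableEq for Formula

/-- Parallel (simultaneous) substitution. -/
def psub (σ : ℕ → Formula) : Formula → Formula
  | .prop p => .prop p
  | .nprop p => .nprop p
  | .var y => σ y
  | .or a b => .or (psub σ a) (psub σ b)
  | .and a b => .and (psub σ a) (psub σ b)
  | .dia a => .dia (psub σ a)
  | .box a => .box (psub σ a)
  | .mu x a => .mu x (psub (Function.update σ x (.var x)) a)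
  | .nu x a => .nu x (psub (Function.update σ x (.var x)) a)

theorem psub_congr (t : Formula) : ∀ σ₁ σ₂ : ℕ → Formula,
    (∀ y, t.FreeIn y → σ₁ y = σ₂ y) → psub σ₁ t = psub σ₂ t := by
  induction t with
  | prop p => intros; rfl
  | nprop p => intros; rfl
  | var y => intro σ₁ σ₂ h; exact h y rfl
  | or a b iha ihb =>
      intro σ₁ σ₂ h
      simp only [psub]
      rw [iha _ _ fun y hy => h y (Or.inl hy), ihb _ _ fun y hy => h y (Or.inr hy)]
  | and a b iha ihb =>
      intro σ₁ σ₂ h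
      simp only [psub]
      rw [iha _ _ fun y hy => h y (Or.inl hy), ihb _ _ fun y hy => h y (Or.inr hy)]
  | dia a ih => intro σ₁ σ₂ h; simp only [psub]; rw [ih _ _ fun y hy => h y hy]
  | box a ih => intro σ₁ σ₂ h; simp only [psub]; rw [ih _ _ fun y hy => h y hy]
  | mu x a ih =>
      intro σ₁ σ₂ h
      simp only [psub]
      congr 1
      apply ih
      intro y hy
      by_cases hyx : y = x
      · subst hyx; simp
      · rw [Function.update_of_ne hyx, Function.update_of_ne hyx]
        exact h y ⟨Ne.symm hyx, hy⟩
  | nu x a ih =>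
      intro σ₁ σ₂ h
      simp only [psub]
      congr 1
      apply ih
      intro y hy
      by_cases hyx : y = x
      · subst hyx; simp
      · rw [Function.update_of_ne hyx, Function.update_of_ne hyx]
        exact h y ⟨Ne.symm hyx, hy⟩

theorem psub_id (t : Formula) : psub Formula.var t = t := by
  induction t with
  | prop p => rfl
  | nprop p => rfl
  | var y => rfl
  | or a b iha ihb => simp only [psub]; rw [iha, ihb]
  | and a b iha ihb => simp only [psub]; rw [iha, ihb]
  | dia a ih => simp only [psub]; rw [ih]
  | box a ih => simp only [psub]; rw [ih]
  | mu x a ih =>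
      simp only [psub]
      rw [psub_congr a (Function.update Formula.var x (.var x)) Formula.var
        (by intro y _; by_cases hyx : y = x
            · subst hyx; simp
            · rw [Function.update_of_ne hyx]), ih]
  | nu x a ih =>
      simp only [psub]
      rw [psub_congr a (Function.update Formula.var x (.var x)) Formula.var
        (by intro y _; by_cases hyx : y = x
            · subst hyx; simp
            · rw [Function.update_of_ne hyx]), ih]

theorem psub_closed_eq {t : Formula} (ht : t.Closed) (σ : ℕ → Formula) :
    psub σ t = t := by
  rw [psub_congr t σ Formula.var (by intro y hy; exact absurd hy (ht y)), psub_id]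

theorem not_freeIn_psub (t : Formula) : ∀ (σ : ℕ → Formula) (z : ℕ),
    (∀ y, t.FreeIn y → ¬ (σ y).FreeIn z) → ¬ (psub σ t).FreeIn z := by
  induction t with
  | prop p => intro σ z h hc; exact hc
  | nprop p => intro σ z h hc; exact hc
  | var y => intro σ z h hc; exact h y rfl hc
  | or a b iha ihb =>
      intro σ z h hc
      rcases hc with hc | hc
      · exact iha σ z (fun y hy => h y (Or.inl hy)) hc
      · exact ihb σ z (fun y hy => h y (Or.inr hy)) hc
  | and a b iha ihb =>
      intro σ z h hc
      rcases hc with hc | hc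
      · exact iha σ z (fun y hy => h y (Or.inl hy)) hc
      · exact ihb σ z (fun y hy => h y (Or.inr hy)) hc
  | dia a ih => intro σ z h hc; exact ih σ z h hc
  | box a ih => intro σ z h hc; exact ih σ z h hc
  | mu x a ih =>
      intro σ z h hc
      obtain ⟨hxz, hc⟩ := hc
      refine ih _ z ?_ hc
      intro y hy
      by_cases hyx : y = x
      · subst hyx; rw [Function.update_self]; exact fun hc2 => hxz hc2
      · rw [Function.update_of_ne hyx]; exact h y ⟨Ne.symm hyx, hy⟩
  | nu x a ih =>
      intro σ z h hc
      obtain ⟨hxz, hc⟩ := hc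
      refine ih _ z ?_ hc
      intro y hy
      by_cases hyx : y = x
      · subst hyx; rw [Function.update_self]; exact fun hc2 => hxz hc2
      · rw [Function.update_of_ne hyx]; exact h y ⟨Ne.symm hyx, hy⟩

theorem psub_closed {t : Formula} {σ : ℕ → Formula}
    (h : ∀ y, t.FreeIn y → (σ y).Closed) : (psub σ t).Closed := by
  intro z
  exact not_freeIn_psub t σ z (fun y hy => h y hy z)

theorem subst_eq_psub (x : ℕ) (δ : Formula) (t : Formula) :
    Formula.subst x δ t = psub (Function.update Formula.var x δ) t := by
  induction t with
  | prop p => rfl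
  | nprop p => rfl
  | var y =>
      by_cases hyx : y = x
      · subst hyx; simp [Formula.subst, psub]
      · simp [Formula.subst, psub, hyx, Function.update_of_ne hyx]
  | or a b iha ihb => simp only [Formula.subst, psub]; rw [iha, ihb]
  | and a b iha ihb => simp only [Formula.subst, psub]; rw [iha, ihb]
  | dia a ih => simp only [Formula.subst, psub]; rw [ih]
  | box a ih => simp only [Formula.subst, psub]; rw [ih]
  | mu y a ih =>
      by_cases hyx : y = x
      · subst hyx
        show (if y = y then _ else _) = _
        rw [if_pos rfl]
        simp only [psub, Function.update_idem, Function.update_eq_self, psub_id]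
      · show (if y = x then _ else _) = _
        rw [if_neg hyx]
        simp only [psub]
        congr 1
        rw [ih]
        apply psub_congr
        intro w _
        by_cases hwy : w = y
        · subst hwy; rw [Function.update_of_ne hyx, Function.update_self]
        · rw [Function.update_of_ne hwy]
  | nu y a ih =>
      by_cases hyx : y = x
      · subst hyx
        show (if y = y then _ else _) = _
        rw [if_pos rfl]
        simp only [psub, Function.update_idem, Function.update_eq_self, psub_id]
      · show (if y = x then _ else _) = _
        rw [if_neg hyx]
        simp only [psub]
        congr 1
        rw [ih]
        apply psub_congr
        intro w _
        by_cases hwy : w = y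
        · subst hwy; rw [Function.update_of_ne hyx, Function.update_self]
        · rw [Function.update_of_ne hwy]

/-- A substitution is "ok" if it maps each variable to itself or to a closed formula. -/
def Ok (σ : ℕ → Formula) : Prop := ∀ z, σ z = .var z ∨ (σ z).Closed

theorem ok_update {σ : ℕ → Formula} (h : Ok σ) (x : ℕ) {F : Formula}
    (hF : F = Formula.var x ∨ F.Closed) : Ok (Function.update σ x F) := by
  intro z
  by_cases hzx : z = x
  · subst hzx; simpa using hF
  · rw [Function.update_of_ne hzx]; exact h z

theorem psub_psub (t : Formula) : ∀ (σ τ : ℕ → Formula), Ok σ → Ok τ →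
    psub σ (psub τ t) = psub (fun z => psub σ (τ z)) t := by
  induction t with
  | prop p => intros; rfl
  | nprop p => intros; rfl
  | var y => intros; rfl
  | or a b iha ihb =>
      intro σ τ hσ hτ
      simp only [psub]
      rw [iha σ τ hσ hτ, ihb σ τ hσ hτ]
  | and a b iha ihb =>
      intro σ τ hσ hτ
      simp only [psub]
      rw [iha σ τ hσ hτ, ihb σ τ hσ hτ]
  | dia a ih => intro σ τ hσ hτ; simp only [psub]; rw [ih σ τ hσ hτ]
  | box a ih => intro σ τ hσ hτ; simp only [psub]; rw [ih σ τ hσ hτ]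
  | mu x a ih =>
      intro σ τ hσ hτ
      simp only [psub]
      rw [ih _ _ (ok_update hσ x (Or.inl rfl)) (ok_update hτ x (Or.inl rfl))]
      congr 1
      apply psub_congr
      intro y _
      by_cases hyx : y = x
      · subst hyx; simp [psub]
      · rw [Function.update_of_ne hyx, Function.update_of_ne hyx]
        rcases hτ y with h | h
        · rw [h]; simp [psub, Function.update_of_ne hyx]
        · rw [psub_closed_eq h, psub_closed_eq h]
  | nu x a ih =>
      intro σ τ hσ hτ
      simp only [psub]
      rw [ih _ _ (ok_update hσ x (Or.inl rfl)) (ok_update hτ x (Or.inl rfl))]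
      congr 1
      apply psub_congr
      intro y _
      by_cases hyx : y = x
      · subst hyx; simp [psub]
      · rw [Function.update_of_ne hyx, Function.update_of_ne hyx]
        rcases hτ y with h | h
        · rw [h]; simp [psub, Function.update_of_ne hyx]
        · rw [psub_closed_eq h, psub_closed_eq h]

/-- The Fischer–Ladner-style closure of a formula under a substitution
environment. -/
def closE : Formula → (ℕ → Formula) → Finset Formula
  | .prop p, _ => {.prop p}
  | .nprop p, _ => {.nprop p}
  | .var y, σ => {σ y}
  | .or a b, σ => insert (psub σ (.or a b)) (closE a σ ∪ closE b σ)
  | .and a b, σ => insert (psub σ (.and a b)) (closE a σ ∪ closE b σ)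
  | .dia a, σ => insert (psub σ (.dia a)) (closE a σ)
  | .box a, σ => insert (psub σ (.box a)) (closE a σ)
  | .mu x a, σ =>
      insert (psub σ (.mu x a)) (closE a (Function.update σ x (psub σ (.mu x a))))
  | .nu x a, σ =>
      insert (psub σ (.nu x a)) (closE a (Function.update σ x (psub σ (.nu x a))))

theorem mem_closE_self (t : Formula) (σ : ℕ → Formula) : psub σ t ∈ closE t σ := by
  cases t <;> simp [closE, psub]

theorem step_closed (S : Finset Formula) :
    ∀ (φ : Formula) (σ : ℕ → Formula),
    closE φ σ ⊆ S → Ok σ →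
    (∀ z, φ.FreeIn z → (σ z).Closed) →
    (∀ z, φ.FreeIn z → ∀ χ, TraceStep (σ z) χ → χ ∈ S) →
    ∀ ψ ∈ closE φ σ, ∀ χ, TraceStep ψ χ → χ ∈ S := by
  intro φ
  induction φ with
  | prop p =>
      intro σ hS _ _ _ ψ hψ χ hst
      simp only [closE, Finset.mem_singleton] at hψ
      subst hψ; cases hst
  | nprop p =>
      intro σ hS _ _ _ ψ hψ χ hst
      simp only [closE, Finset.mem_singleton] at hψ
      subst hψ; cases hst
  | var y =>
      intro σ hS _ _ henv ψ hψ χ hst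
      simp only [closE, Finset.mem_singleton] at hψ
      subst hψ
      exact henv y rfl χ hst
  | or a b iha ihb =>
      intro σ hS hok hcl henv ψ hψ χ hst
      have hSa : closE a σ ⊆ S := fun x hx =>
        hS (by simp only [closE, Finset.mem_insert, Finset.mem_union]; exact Or.inr (Or.inl hx))
      have hSb : closE b σ ⊆ S := fun x hx =>
        hS (by simp only [closE, Finset.mem_insert, Finset.mem_union]; exact Or.inr (Or.inr hx))
      simp only [closE, Finset.mem_insert, Finset.mem_union] at hψ
      rcases hψ with hψ | hψ | hψ
      · subst hψ
        simp only [psub] at hst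
        cases hst with
        | orL => exact hSa (mem_closE_self a σ)
        | orR => exact hSb (mem_closE_self b σ)
      · exact iha σ hSa hok (fun z hz => hcl z (Or.inl hz))
          (fun z hz => henv z (Or.inl hz)) ψ hψ χ hst
      · exact ihb σ hSb hok (fun z hz => hcl z (Or.inr hz))
          (fun z hz => henv z (Or.inr hz)) ψ hψ χ hst
  | and a b iha ihb =>
      intro σ hS hok hcl henv ψ hψ χ hst
      have hSa : closE a σ ⊆ S := fun x hx =>
        hS (by simp only [closE, Finset.mem_insert, Finset.mem_union]; exact Or.inr (Or.inl hx))
      have hSb : closE b σ ⊆ S := fun x hx =>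
        hS (by simp only [closE, Finset.mem_insert, Finset.mem_union]; exact Or.inr (Or.inr hx))
      simp only [closE, Finset.mem_insert, Finset.mem_union] at hψ
      rcases hψ with hψ | hψ | hψ
      · subst hψ
        simp only [psub] at hst
        cases hst with
        | andL => exact hSa (mem_closE_self a σ)
        | andR => exact hSb (mem_closE_self b σ)
      · exact iha σ hSa hok (fun z hz => hcl z (Or.inl hz))
          (fun z hz => henv z (Or.inl hz)) ψ hψ χ hst
      · exact ihb σ hSb hok (fun z hz => hcl z (Or.inr hz))
          (fun z hz => henv z (Or.inr hz)) ψ hψ χ hst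
  | dia a ih =>
      intro σ hS hok hcl henv ψ hψ χ hst
      have hSa : closE a σ ⊆ S := fun x hx =>
        hS (by simp only [closE, Finset.mem_insert]; exact Or.inr hx)
      simp only [closE, Finset.mem_insert] at hψ
      rcases hψ with hψ | hψ
      · subst hψ
        simp only [psub] at hst
        cases hst with
        | dia => exact hSa (mem_closE_self a σ)
      · exact ih σ hSa hok hcl henv ψ hψ χ hst
  | box a ih =>
      intro σ hS hok hcl henv ψ hψ χ hst
      have hSa : closE a σ ⊆ S := fun x hx =>
        hS (by simp only [closE, Finset.mem_insert]; exact Or.inr hx)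
      simp only [closE, Finset.mem_insert] at hψ
      rcases hψ with hψ | hψ
      · subst hψ
        simp only [psub] at hst
        cases hst with
        | box => exact hSa (mem_closE_self a σ)
      · exact ih σ hSa hok hcl henv ψ hψ χ hst
  | mu x a ih =>
      intro σ hS hok hcl henv ψ hψ χ hst
      set F : Formula := psub σ (.mu x a) with hFdef
      have hFcl : F.Closed := psub_closed hcl
      set σ' : ℕ → Formula := Function.update σ x F with hσ'def
      have hok' : Ok σ' := ok_update hok x (Or.inr hFcl)
      have hSa : closE a σ' ⊆ S := fun w hw =>
        hS (by simp only [closE, Finset.mem_insert]; exact Or.inr hw)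
      -- any step from F lands in `closE a σ'`
      have hFstep : ∀ χ, TraceStep F χ → χ = psub σ' a := by
        intro χ hst
        have hF : F = Formula.mu x (psub (Function.update σ x (.var x)) a) := rfl
        rw [hF] at hst
        cases hst with
        | mu =>
            rw [subst_eq_psub, psub_psub a _ _
              (ok_update (fun z => Or.inl rfl) x (Or.inr (hF ▸ hFcl)))
              (ok_update hok x (Or.inl rfl))]
            apply psub_congr
            intro y _
            by_cases hyx : y = x
            · subst hyx
              simp only [hσ'def, Function.update_self]
              simp [psub, hFdef]
            · rw [hσ'def, Function.update_of_ne hyx, Function.update_of_ne hyx]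
              rcases hok y with h | h
              · rw [h]; simp [psub, Function.update_of_ne hyx]
              · rw [psub_closed_eq h]
      have hcl' : ∀ z, a.FreeIn z → (σ' z).Closed := by
        intro z hz
        by_cases hzx : z = x
        · subst hzx; rw [hσ'def, Function.update_self]; exact hFcl
        · rw [hσ'def, Function.update_of_ne hzx]
          exact hcl z ⟨Ne.symm hzx, hz⟩
      have henv' : ∀ z, a.FreeIn z → ∀ χ, TraceStep (σ' z) χ → χ ∈ S := by
        intro z hz χ hstep
        by_cases hzx : z = x
        · subst hzx
          rw [hσ'def, Function.update_self] at hstep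
          rw [hFstep χ hstep]
          exact hSa (mem_closE_self a σ')
        · rw [hσ'def, Function.update_of_ne hzx] at hstep
          exact henv z ⟨Ne.symm hzx, hz⟩ χ hstep
      simp only [closE, Finset.mem_insert] at hψ
      rcases hψ with hψ | hψ
      · subst hψ
        rw [hFstep χ hst]
        exact hSa (mem_closE_self a σ')
      · exact ih σ' hSa hok' hcl' henv' ψ hψ χ hst
  | nu x a ih =>
      intro σ hS hok hcl henv ψ hψ χ hst
      set F : Formula := psub σ (.nu x a) with hFdef
      have hFcl : F.Closed := psub_closed hcl
      set σ' : ℕ → Formula := Function.update σ x F with hσ'def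
      have hok' : Ok σ' := ok_update hok x (Or.inr hFcl)
      have hSa : closE a σ' ⊆ S := fun w hw =>
        hS (by simp only [closE, Finset.mem_insert]; exact Or.inr hw)
      have hFstep : ∀ χ, TraceStep F χ → χ = psub σ' a := by
        intro χ hst
        have hF : F = Formula.nu x (psub (Function.update σ x (.var x)) a) := rfl
        rw [hF] at hst
        cases hst with
        | nu =>
            rw [subst_eq_psub, psub_psub a _ _
              (ok_update (fun z => Or.inl rfl) x (Or.inr (hF ▸ hFcl)))
              (ok_update hok x (Or.inl rfl))]
            apply psub_congr
            intro y _
            by_cases hyx : y = x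
            · subst hyx
              simp only [hσ'def, Function.update_self]
              simp [psub, hFdef]
            · rw [hσ'def, Function.update_of_ne hyx, Function.update_of_ne hyx]
              rcases hok y with h | h
              · rw [h]; simp [psub, Function.update_of_ne hyx]
              · rw [psub_closed_eq h]
      have hcl' : ∀ z, a.FreeIn z → (σ' z).Closed := by
        intro z hz
        by_cases hzx : z = x
        · subst hzx; rw [hσ'def, Function.update_self]; exact hFcl
        · rw [hσ'def, Function.update_of_ne hzx]
          exact hcl z ⟨Ne.symm hzx, hz⟩
      have henv' : ∀ z, a.FreeIn z → ∀ χ, TraceStep (σ' z) χ → χ ∈ S := by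
        intro z hz χ hstep
        by_cases hzx : z = x
        · subst hzx
          rw [hσ'def, Function.update_self] at hstep
          rw [hFstep χ hstep]
          exact hSa (mem_closE_self a σ')
        · rw [hσ'def, Function.update_of_ne hzx] at hstep
          exact henv z ⟨Ne.symm hzx, hz⟩ χ hstep
      simp only [closE, Finset.mem_insert] at hψ
      rcases hψ with hψ | hψ
      · subst hψ
        rw [hFstep χ hst]
        exact hSa (mem_closE_self a σ')
      · exact ih σ' hSa hok' hcl' henv' ψ hψ χ hst

theorem trace_mem {φ ψ : Formula} (hφ : φ.Closed) (ht : Trace φ ψ) :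
    ψ ∈ closE φ Formula.var := by
  induction ht with
  | refl =>
      have := mem_closE_self φ Formula.var
      rwa [psub_id] at this
  | tail _ hstep ih =>
      exact step_closed (closE φ Formula.var) φ Formula.var (fun _ h => h)
        (fun z => Or.inl rfl) (fun z hz => absurd hz (hφ z))
        (fun z hz => absurd hz (hφ z)) _ ih _ hstep

/-- For a finite set `Φ` of closed formulas, the closure of `Φ` under the trace
relation is finite. -/
theorem closure_finite (Φ : Set Formula) (hfin : Φ.Finite)
    (hclosed : ∀ φ ∈ Φ, φ.Closed) :
    Set.Finite {ψ : Formula | ∃ φ ∈ Φ, Trace φ ψ} := by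
  have hsub : {ψ : Formula | ∃ φ ∈ Φ, Trace φ ψ} ⊆ ⋃ φ ∈ Φ, (closE φ Formula.var : Set Formula) := by
    rintro ψ ⟨φ, hφ, ht⟩
    exact Set.mem_biUnion hφ (trace_mem (hclosed φ hφ) ht)
  exact Set.Finite.subset (Set.Finite.biUnion hfin fun φ _ => (closE φ Formula.var).finite_toSet) hsub
end

section
/- There exists a rank function from closed modal μ-calculus formulas to the natural numbers satisfying: rank(p) = rank(p̄) = 1; rank(φ) = rank(ψ) whenever φ →* ψ and ψ →* φ; and rank(φ) > rank(ψ) whenever φ →* ψ but not ψ →* φ. -/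
/-- Every free occurrence of `x` in the formula is in the scope of a
modality. -/
def Formula.GuardedIn (x : ℕ) : Formula → Prop
  | .prop _ => True
  | .nprop _ => True
  | .var y => y ≠ x
  | .or φ ψ => φ.GuardedIn x ∧ ψ.GuardedIn x
  | .and φ ψ => φ.GuardedIn x ∧ ψ.GuardedIn x
  | .dia _ => True
  | .box _ => True
  | .mu y φ => y = x ∨ φ.GuardedIn x
  | .nu y φ => y = x ∨ φ.GuardedIn x

/-- A formula is guarded if every bound variable is guarded inside its
binder. -/
def Formula.Guarded (φ : Formula) : Prop :=
  (∀ x ψ, Subformula (.mu x ψ) φ → ψ.GuardedIn x) ∧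
  (∀ x ψ, Subformula (.nu x ψ) φ → ψ.GuardedIn x)

deriving instance DecidableEq for Formula

namespace RankAux

open Formula

theorem subst_of_not_free {x : ℕ} {δ : Formula} :
    ∀ {φ : Formula}, ¬ φ.FreeIn x → Formula.subst x δ φ = φ := by
  intro φ
  induction φ with
  | prop p => intro; rfl
  | nprop p => intro; rfl
  | var y => intro h; simp [Formula.FreeIn] at h; simp [Formula.subst, h]
  | or a b iha ihb =>
      intro h; simp [Formula.FreeIn] at h
      simp [Formula.subst, iha h.1, ihb h.2]
  | and a b iha ihb =>
      intro h; simp [Formula.FreeIn] at h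
      simp [Formula.subst, iha h.1, ihb h.2]
  | dia a ih => intro h; simp only [Formula.FreeIn] at h; simp [Formula.subst, ih h]
  | box a ih => intro h; simp only [Formula.FreeIn] at h; simp [Formula.subst, ih h]
  | mu y a ih =>
      intro h
      by_cases hyx : y = x
      · simp [Formula.subst, hyx]
      · simp [Formula.FreeIn, hyx] at h
        simp [Formula.subst, hyx, ih h]
  | nu y a ih =>
      intro h
      by_cases hyx : y = x
      · simp [Formula.subst, hyx]
      · simp [Formula.FreeIn, hyx] at h
        simp [Formula.subst, hyx, ih h]

theorem freeIn_subst {x y : ℕ} {δ : Formula} :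
    ∀ {φ : Formula}, (Formula.subst x δ φ).FreeIn y → (φ.FreeIn y ∧ y ≠ x) ∨ δ.FreeIn y := by
  intro φ
  induction φ with
  | prop p => intro h; simp [Formula.subst, Formula.FreeIn] at h
  | nprop p => intro h; simp [Formula.subst, Formula.FreeIn] at h
  | var z =>
      intro h
      by_cases hzx : z = x
      · simp [Formula.subst, hzx] at h; exact Or.inr h
      · simp [Formula.subst, hzx, Formula.FreeIn] at h
        exact Or.inl ⟨h, fun hyx => hzx (h.trans hyx)⟩
  | or a b iha ihb =>
      intro h
      simp only [Formula.subst, Formula.FreeIn] at h ⊢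
      rcases h with h | h
      · rcases iha h with ⟨h1, h2⟩ | h1
        · exact Or.inl ⟨Or.inl h1, h2⟩
        · exact Or.inr h1
      · rcases ihb h with ⟨h1, h2⟩ | h1
        · exact Or.inl ⟨Or.inr h1, h2⟩
        · exact Or.inr h1
  | and a b iha ihb =>
      intro h
      simp only [Formula.subst, Formula.FreeIn] at h ⊢
      rcases h with h | h
      · rcases iha h with ⟨h1, h2⟩ | h1
        · exact Or.inl ⟨Or.inl h1, h2⟩
        · exact Or.inr h1
      · rcases ihb h with ⟨h1, h2⟩ | h1
        · exact Or.inl ⟨Or.inr h1, h2⟩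
        · exact Or.inr h1
  | dia a ih =>
      intro h
      simp only [Formula.subst, Formula.FreeIn] at h ⊢
      exact ih h
  | box a ih =>
      intro h
      simp only [Formula.subst, Formula.FreeIn] at h ⊢
      exact ih h
  | mu z a ih =>
      intro h
      by_cases hzx : z = x
      · simp only [Formula.subst, hzx, if_pos rfl] at h
        change _ ≠ y ∧ a.FreeIn y at h
        exact Or.inl ⟨⟨fun hzy => h.1 (hzx ▸ hzy), h.2⟩, fun hyx => h.1 hyx.symm⟩
      · simp only [Formula.subst, if_neg hzx] at h
        simp only [Formula.FreeIn] at h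
        rcases ih h.2 with ⟨h1, h2⟩ | h1
        · exact Or.inl ⟨⟨h.1, h1⟩, h2⟩
        · exact Or.inr h1
  | nu z a ih =>
      intro h
      by_cases hzx : z = x
      · simp only [Formula.subst, hzx, if_pos rfl] at h
        change _ ≠ y ∧ a.FreeIn y at h
        exact Or.inl ⟨⟨fun hzy => h.1 (hzx ▸ hzy), h.2⟩, fun hyx => h.1 hyx.symm⟩
      · simp only [Formula.subst, if_neg hzx] at h
        simp only [Formula.FreeIn] at h
        rcases ih h.2 with ⟨h1, h2⟩ | h1
        · exact Or.inl ⟨⟨h.1, h1⟩, h2⟩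
        · exact Or.inr h1

theorem not_freeIn_subst_self {x : ℕ} {δ φ : Formula} (hδ : ¬ δ.FreeIn x) :
    ¬ (Formula.subst x δ φ).FreeIn x := by
  intro h
  rcases freeIn_subst h with ⟨_, h2⟩ | h1
  · exact h2 rfl
  · exact hδ h1

theorem subst_comm {x y : ℕ} {δ ε : Formula} (hxy : x ≠ y)
    (hδ : ¬ δ.FreeIn y) (hε : ¬ ε.FreeIn x) :
    ∀ (φ : Formula), Formula.subst y ε (Formula.subst x δ φ) = Formula.subst x δ (Formula.subst y ε φ) := by
  intro φ
  induction φ with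
  | prop p => rfl
  | nprop p => rfl
  | var z =>
      by_cases hzx : z = x
      · have hzy : ¬ z = y := fun h => hxy (hzx ▸ h)
        simp [Formula.subst, hzx, hzy, hxy, Ne.symm hxy, subst_of_not_free hδ]
      · by_cases hzy : z = y
        · simp [Formula.subst, hzx, hzy, hxy, Ne.symm hxy, subst_of_not_free hε]
        · simp [Formula.subst, hzx, hzy]
  | or a b iha ihb => simp [Formula.subst, iha, ihb]
  | and a b iha ihb => simp [Formula.subst, iha, ihb]
  | dia a ih => simp [Formula.subst, ih]
  | box a ih => simp [Formula.subst, ih]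
  | mu z a ih =>
      by_cases hzx : z = x
      · have hzy : ¬ z = y := fun h => hxy (hzx ▸ h)
        simp [Formula.subst, hzx, hzy, hxy, Ne.symm hxy]
      · by_cases hzy : z = y
        · simp [Formula.subst, hzx, hzy, hxy, Ne.symm hxy]
        · simp [Formula.subst, hzx, hzy, ih]
  | nu z a ih =>
      by_cases hzx : z = x
      · have hzy : ¬ z = y := fun h => hxy (hzx ▸ h)
        simp [Formula.subst, hzx, hzy, hxy, Ne.symm hxy]
      · by_cases hzy : z = y
        · simp [Formula.subst, hzx, hzy, hxy, Ne.symm hxy]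
        · simp [Formula.subst, hzx, hzy, ih]

/-- Sequential application of a list of substitutions (head applied first). -/
def Esub (σ : List (ℕ × Formula)) (φ : Formula) : Formula :=
  σ.foldl (fun acc p => Formula.subst p.1 p.2 acc) φ

@[simp] theorem Esub_nil (φ : Formula) : Esub [] φ = φ := rfl

@[simp] theorem Esub_cons (p : ℕ × Formula) (σ : List (ℕ × Formula)) (φ : Formula) :
    Esub (p :: σ) φ = Esub σ (Formula.subst p.1 p.2 φ) := rfl

theorem Esub_prop (σ : List (ℕ × Formula)) (p : ℕ) : Esub σ (.prop p) = .prop p := by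
  induction σ with
  | nil => rfl
  | cons hd tl ih => exact ih

theorem Esub_nprop (σ : List (ℕ × Formula)) (p : ℕ) : Esub σ (.nprop p) = .nprop p := by
  induction σ with
  | nil => rfl
  | cons hd tl ih => exact ih

theorem Esub_or (σ : List (ℕ × Formula)) :
    ∀ a b : Formula, Esub σ (.or a b) = .or (Esub σ a) (Esub σ b) := by
  induction σ with
  | nil => intro a b; rfl
  | cons hd tl ih => intro a b; exact ih _ _

theorem Esub_and (σ : List (ℕ × Formula)) :
    ∀ a b : Formula, Esub σ (.and a b) = .and (Esub σ a) (Esub σ b) := by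
  induction σ with
  | nil => intro a b; rfl
  | cons hd tl ih => intro a b; exact ih _ _

theorem Esub_dia (σ : List (ℕ × Formula)) :
    ∀ a : Formula, Esub σ (.dia a) = .dia (Esub σ a) := by
  induction σ with
  | nil => intro a; rfl
  | cons hd tl ih => intro a; exact ih _

theorem Esub_box (σ : List (ℕ × Formula)) :
    ∀ a : Formula, Esub σ (.box a) = .box (Esub σ a) := by
  induction σ with
  | nil => intro a; rfl
  | cons hd tl ih => intro a; exact ih _

theorem Esub_of_closed {σ : List (ℕ × Formula)} {δ : Formula} (h : δ.Closed) :
    Esub σ δ = δ := by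
  induction σ with
  | nil => rfl
  | cons hd tl ih =>
      rw [Esub_cons, subst_of_not_free (h hd.1)]
      exact ih

theorem Esub_var (σ : List (ℕ × Formula)) (hcl : ∀ p ∈ σ, p.2.Closed) (y : ℕ) :
    Esub σ (.var y) = .var y ∨ ∃ p ∈ σ, Esub σ (.var y) = p.2 := by
  induction σ with
  | nil => exact Or.inl rfl
  | cons hd tl ih =>
      by_cases hxy : y = hd.1
      · right
        refine ⟨hd, List.mem_cons_self, ?_⟩
        have h1 : Formula.subst hd.1 hd.2 (Formula.var y) = hd.2 := by
          simp [Formula.subst, hxy]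
        rw [Esub_cons, h1]
        exact Esub_of_closed (hcl hd (List.mem_cons_self))
      · have h1 : Formula.subst hd.1 hd.2 (Formula.var y) = Formula.var y := by
          simp [Formula.subst, hxy]
        rw [Esub_cons, h1]
        rcases ih (fun p hp => hcl p (List.mem_cons_of_mem _ hp)) with h | ⟨p, hp, h⟩
        · exact Or.inl h
        · exact Or.inr ⟨p, List.mem_cons_of_mem _ hp, h⟩

theorem freeIn_Esub {σ : List (ℕ × Formula)} (hcl : ∀ p ∈ σ, p.2.Closed) {y : ℕ} :
    ∀ {φ : Formula}, (Esub σ φ).FreeIn y → φ.FreeIn y := by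
  induction σ with
  | nil => intro φ h; exact h
  | cons hd tl ih =>
      intro φ h
      have h' := ih (fun p hp => hcl p (List.mem_cons_of_mem _ hp)) h
      rcases freeIn_subst h' with ⟨h1, _⟩ | h1
      · exact h1
      · exact absurd h1 (hcl hd (List.mem_cons_self) y)

theorem closed_Esub {σ : List (ℕ × Formula)} (hcl : ∀ p ∈ σ, p.2.Closed)
    {φ : Formula} (hfv : ∀ y, φ.FreeIn y → y ∈ σ.map Prod.fst) :
    (Esub σ φ).Closed := by
  induction σ generalizing φ with
  | nil =>
      intro y hy
      exact absurd (hfv y hy) (by simp)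
  | cons hd tl ih =>
      refine ih (fun p hp => hcl p (List.mem_cons_of_mem _ hp)) ?_
      intro y hy
      rcases freeIn_subst hy with ⟨h1, h2⟩ | h1
      · have hm := hfv y h1
        rw [List.map_cons, List.mem_cons] at hm
        rcases hm with h | h
        · exact absurd h h2
        · exact h
      · exact absurd h1 (hcl hd (List.mem_cons_self) y)

theorem Esub_mu {σ : List (ℕ × Formula)} (hcl : ∀ p ∈ σ, p.2.Closed) (x : ℕ) :
    ∀ ρ : Formula, ∃ ρ', Esub σ (.mu x ρ) = .mu x ρ' ∧
      Formula.subst x (Esub σ (.mu x ρ)) ρ' = Esub σ (Formula.subst x (Esub σ (.mu x ρ)) ρ) := by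
  induction σ with
  | nil => intro ρ; exact ⟨ρ, rfl, rfl⟩
  | cons hd tl ih =>
      intro ρ
      obtain ⟨y, ε⟩ := hd
      have hεcl : ε.Closed := hcl (y, ε) (List.mem_cons_self)
      have htl : ∀ p ∈ tl, p.2.Closed := fun p hp => hcl p (List.mem_cons_of_mem _ hp)
      by_cases hyx : x = y
      · have hsub : Formula.subst y ε (Formula.mu x ρ) = .mu x ρ := by
          simp [Formula.subst, hyx]
        have hD : Esub ((y, ε) :: tl) (.mu x ρ) = Esub tl (.mu x ρ) := by
          rw [Esub_cons, hsub]
        obtain ⟨ρ', h1, h2⟩ := ih htl ρ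
        refine ⟨ρ', by rw [hD, h1], ?_⟩
        rw [hD, h2, Esub_cons]
        congr 1
        have hnf : ¬ (Formula.subst x (Esub tl (.mu x ρ)) ρ).FreeIn x := by
          apply not_freeIn_subst_self
          rw [h1]
          intro hf
          simp only [Formula.FreeIn] at hf
          exact hf.1 rfl
        rw [← hyx]
        exact (subst_of_not_free hnf).symm
      · have hsub : Formula.subst y ε (Formula.mu x ρ) = .mu x (Formula.subst y ε ρ) := by
          simp [Formula.subst, hyx]
        have hD : Esub ((y, ε) :: tl) (.mu x ρ) = Esub tl (.mu x (Formula.subst y ε ρ)) := by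
          rw [Esub_cons, hsub]
        obtain ⟨ρ', h1, h2⟩ := ih htl (Formula.subst y ε ρ)
        refine ⟨ρ', by rw [hD, h1], ?_⟩
        rw [hD, h2, Esub_cons]
        congr 1
        set D := Esub tl (.mu x (Formula.subst y ε ρ)) with hDdef
        have hDy : ¬ D.FreeIn y := by
          intro hf
          have := freeIn_Esub htl hf
          simp only [Formula.FreeIn] at this
          rcases freeIn_subst this.2 with ⟨_, h2'⟩ | h1'
          · exact h2' rfl
          · exact hεcl y h1'
        have hεx : ¬ ε.FreeIn x := hεcl x
        exact (subst_comm hyx hDy hεx ρ).symm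

theorem Esub_nu {σ : List (ℕ × Formula)} (hcl : ∀ p ∈ σ, p.2.Closed) (x : ℕ) :
    ∀ ρ : Formula, ∃ ρ', Esub σ (.nu x ρ) = .nu x ρ' ∧
      Formula.subst x (Esub σ (.nu x ρ)) ρ' = Esub σ (Formula.subst x (Esub σ (.nu x ρ)) ρ) := by
  induction σ with
  | nil => intro ρ; exact ⟨ρ, rfl, rfl⟩
  | cons hd tl ih =>
      intro ρ
      obtain ⟨y, ε⟩ := hd
      have hεcl : ε.Closed := hcl (y, ε) (List.mem_cons_self)
      have htl : ∀ p ∈ tl, p.2.Closed := fun p hp => hcl p (List.mem_cons_of_mem _ hp)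
      by_cases hyx : x = y
      · have hsub : Formula.subst y ε (Formula.nu x ρ) = .nu x ρ := by
          simp [Formula.subst, hyx]
        have hD : Esub ((y, ε) :: tl) (.nu x ρ) = Esub tl (.nu x ρ) := by
          rw [Esub_cons, hsub]
        obtain ⟨ρ', h1, h2⟩ := ih htl ρ
        refine ⟨ρ', by rw [hD, h1], ?_⟩
        rw [hD, h2, Esub_cons]
        congr 1
        have hnf : ¬ (Formula.subst x (Esub tl (.nu x ρ)) ρ).FreeIn x := by
          apply not_freeIn_subst_self
          rw [h1]
          intro hf
          simp only [Formula.FreeIn] at hf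
          exact hf.1 rfl
        rw [← hyx]
        exact (subst_of_not_free hnf).symm
      · have hsub : Formula.subst y ε (Formula.nu x ρ) = .nu x (Formula.subst y ε ρ) := by
          simp [Formula.subst, hyx]
        have hD : Esub ((y, ε) :: tl) (.nu x ρ) = Esub tl (.nu x (Formula.subst y ε ρ)) := by
          rw [Esub_cons, hsub]
        obtain ⟨ρ', h1, h2⟩ := ih htl (Formula.subst y ε ρ)
        refine ⟨ρ', by rw [hD, h1], ?_⟩
        rw [hD, h2, Esub_cons]
        congr 1
        set D := Esub tl (.nu x (Formula.subst y ε ρ)) with hDdef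
        have hDy : ¬ D.FreeIn y := by
          intro hf
          have := freeIn_Esub htl hf
          simp only [Formula.FreeIn] at this
          rcases freeIn_subst this.2 with ⟨_, h2'⟩ | h1'
          · exact h2' rfl
          · exact hεcl y h1'
        have hεx : ¬ ε.FreeIn x := hεcl x
        exact (subst_comm hyx hDy hεx ρ).symm

/-- A finite overapproximation of the Fischer–Ladner closure of `Esub σ φ`. -/
def clE : Formula → List (ℕ × Formula) → Finset Formula
  | .prop p, _ => {.prop p}
  | .nprop p, _ => {.nprop p}
  | .var y, σ => {Esub σ (.var y)}
  | .or a b, σ => insert (Esub σ (.or a b)) (clE a σ ∪ clE b σ)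
  | .and a b, σ => insert (Esub σ (.and a b)) (clE a σ ∪ clE b σ)
  | .dia a, σ => insert (Esub σ (.dia a)) (clE a σ)
  | .box a, σ => insert (Esub σ (.box a)) (clE a σ)
  | .mu x ρ, σ => insert (Esub σ (.mu x ρ)) (clE ρ ((x, Esub σ (.mu x ρ)) :: σ))
  | .nu x ρ, σ => insert (Esub σ (.nu x ρ)) (clE ρ ((x, Esub σ (.nu x ρ)) :: σ))

theorem mem_clE_self (φ : Formula) (σ : List (ℕ × Formula)) : Esub σ φ ∈ clE φ σ := by
  cases φ with
  | prop p => simp [clE, Esub_prop]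
  | nprop p => simp [clE, Esub_nprop]
  | var y => simp [clE]
  | or a b => simp [clE]
  | and a b => simp [clE]
  | dia a => simp [clE]
  | box a => simp [clE]
  | mu x ρ => simp [clE]
  | nu x ρ => simp [clE]

theorem clE_step_closed (S : Finset Formula) :
    ∀ (φ : Formula) (σ : List (ℕ × Formula)),
      (∀ p ∈ σ, p.2.Closed) →
      (∀ p ∈ σ, ∀ χ', TraceStep p.2 χ' → χ' ∈ S) →
      (∀ y, φ.FreeIn y → y ∈ σ.map Prod.fst) →
      clE φ σ ⊆ S →
      ∀ χ ∈ clE φ σ, ∀ χ', TraceStep χ χ' → χ' ∈ S := by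
  intro φ
  induction φ with
  | prop p =>
      intro σ _ _ _ _ χ hχ χ' hstep
      simp [clE] at hχ
      subst hχ; cases hstep
  | nprop p =>
      intro σ _ _ _ _ χ hχ χ' hstep
      simp [clE] at hχ
      subst hχ; cases hstep
  | var y =>
      intro σ hcl hgood _ _ χ hχ χ' hstep
      simp [clE] at hχ
      subst hχ
      rcases Esub_var σ hcl y with h | ⟨p, hp, h⟩
      · rw [h] at hstep; cases hstep
      · rw [h] at hstep; exact hgood p hp χ' hstep
  | or a b iha ihb =>
      intro σ hcl hgood hfv hsub χ hχ χ' hstep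
      simp only [clE, Finset.mem_insert, Finset.mem_union] at hχ
      rcases hχ with hχ | hχ | hχ
      · subst hχ
        rw [Esub_or] at hstep
        cases hstep with
        | orL => exact hsub (by simp only [clE, Finset.mem_insert, Finset.mem_union]; exact Or.inr (Or.inl (mem_clE_self a σ)))
        | orR => exact hsub (by simp only [clE, Finset.mem_insert, Finset.mem_union]; exact Or.inr (Or.inr (mem_clE_self b σ)))
      · exact iha σ hcl hgood (fun y hy => hfv y (Or.inl hy))
          (fun z hz => hsub (by simp only [clE, Finset.mem_insert, Finset.mem_union]; exact Or.inr (Or.inl hz))) χ hχ χ' hstep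
      · exact ihb σ hcl hgood (fun y hy => hfv y (Or.inr hy))
          (fun z hz => hsub (by simp only [clE, Finset.mem_insert, Finset.mem_union]; exact Or.inr (Or.inr hz))) χ hχ χ' hstep
  | and a b iha ihb =>
      intro σ hcl hgood hfv hsub χ hχ χ' hstep
      simp only [clE, Finset.mem_insert, Finset.mem_union] at hχ
      rcases hχ with hχ | hχ | hχ
      · subst hχ
        rw [Esub_and] at hstep
        cases hstep with
        | andL => exact hsub (by simp only [clE, Finset.mem_insert, Finset.mem_union]; exact Or.inr (Or.inl (mem_clE_self a σ)))
        | andR => exact hsub (by simp only [clE, Finset.mem_insert, Finset.mem_union]; exact Or.inr (Or.inr (mem_clE_self b σ)))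
      · exact iha σ hcl hgood (fun y hy => hfv y (Or.inl hy))
          (fun z hz => hsub (by simp only [clE, Finset.mem_insert, Finset.mem_union]; exact Or.inr (Or.inl hz))) χ hχ χ' hstep
      · exact ihb σ hcl hgood (fun y hy => hfv y (Or.inr hy))
          (fun z hz => hsub (by simp only [clE, Finset.mem_insert, Finset.mem_union]; exact Or.inr (Or.inr hz))) χ hχ χ' hstep
  | dia a ih =>
      intro σ hcl hgood hfv hsub χ hχ χ' hstep
      simp only [clE, Finset.mem_insert] at hχ
      rcases hχ with hχ | hχ
      · subst hχ
        rw [Esub_dia] at hstep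
        cases hstep with
        | dia => exact hsub (by simp only [clE, Finset.mem_insert]; exact Or.inr (mem_clE_self a σ))
      · exact ih σ hcl hgood (fun y hy => hfv y hy)
          (fun z hz => hsub (by simp only [clE, Finset.mem_insert]; exact Or.inr hz))
          χ hχ χ' hstep
  | box a ih =>
      intro σ hcl hgood hfv hsub χ hχ χ' hstep
      simp only [clE, Finset.mem_insert] at hχ
      rcases hχ with hχ | hχ
      · subst hχ
        rw [Esub_box] at hstep
        cases hstep with
        | box => exact hsub (by simp only [clE, Finset.mem_insert]; exact Or.inr (mem_clE_self a σ))
      · exact ih σ hcl hgood (fun y hy => hfv y hy)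
          (fun z hz => hsub (by simp only [clE, Finset.mem_insert]; exact Or.inr hz))
          χ hχ χ' hstep
  | mu x ρ ih =>
      intro σ hcl hgood hfv hsub χ hχ χ' hstep
      set D := Esub σ (.mu x ρ) with hDdef
      have hDcl : D.Closed := closed_Esub hcl hfv
      obtain ⟨ρ', hD1, hD2⟩ := Esub_mu hcl x ρ
      have hDstep : ∀ χ', TraceStep D χ' → χ' ∈ S := by
        intro χ' hstep'
        rw [← hDdef] at hD1 hD2
        rw [hD1] at hstep'
        cases hstep' with
        | mu =>
            rw [← hD1, hD2]
            have : Esub σ (Formula.subst x D ρ) = Esub ((x, D) :: σ) ρ := rfl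
            rw [this]
            apply hsub
            simp only [clE, Finset.mem_insert, ← hDdef]
            exact Or.inr (mem_clE_self ρ _)
      simp only [clE, Finset.mem_insert, ← hDdef] at hχ
      rcases hχ with hχ | hχ
      · subst hχ; exact hDstep χ' hstep
      · refine ih ((x, D) :: σ) ?_ ?_ ?_ ?_ χ hχ χ' hstep
        · intro p hp
          rcases List.mem_cons.1 hp with h | h
          · rw [h]; exact hDcl
          · exact hcl p h
        · intro p hp
          rcases List.mem_cons.1 hp with h | h
          · rw [h]; exact hDstep
          · exact hgood p h
        · intro y hy
          by_cases hxy : y = x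
          · simp [hxy]
          · have : (Formula.mu x ρ).FreeIn y := ⟨fun h => hxy h.symm, hy⟩
            have := hfv y this
            simp at this ⊢
            exact Or.inr this
        · intro z hz
          apply hsub
          simp only [clE, Finset.mem_insert, ← hDdef]
          exact Or.inr hz
  | nu x ρ ih =>
      intro σ hcl hgood hfv hsub χ hχ χ' hstep
      set D := Esub σ (.nu x ρ) with hDdef
      have hDcl : D.Closed := closed_Esub hcl hfv
      obtain ⟨ρ', hD1, hD2⟩ := Esub_nu hcl x ρ
      have hDstep : ∀ χ', TraceStep D χ' → χ' ∈ S := by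
        intro χ' hstep'
        rw [← hDdef] at hD1 hD2
        rw [hD1] at hstep'
        cases hstep' with
        | nu =>
            rw [← hD1, hD2]
            have : Esub σ (Formula.subst x D ρ) = Esub ((x, D) :: σ) ρ := rfl
            rw [this]
            apply hsub
            simp only [clE, Finset.mem_insert, ← hDdef]
            exact Or.inr (mem_clE_self ρ _)
      simp only [clE, Finset.mem_insert, ← hDdef] at hχ
      rcases hχ with hχ | hχ
      · subst hχ; exact hDstep χ' hstep
      · refine ih ((x, D) :: σ) ?_ ?_ ?_ ?_ χ hχ χ' hstep
        · intro p hp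
          rcases List.mem_cons.1 hp with h | h
          · rw [h]; exact hDcl
          · exact hcl p h
        · intro p hp
          rcases List.mem_cons.1 hp with h | h
          · rw [h]; exact hDstep
          · exact hgood p h
        · intro y hy
          by_cases hxy : y = x
          · simp [hxy]
          · have : (Formula.nu x ρ).FreeIn y := ⟨fun h => hxy h.symm, hy⟩
            have := hfv y this
            simp at this ⊢
            exact Or.inr this
        · intro z hz
          apply hsub
          simp only [clE, Finset.mem_insert, ← hDdef]
          exact Or.inr hz

theorem trace_mem_clE {φ ψ : Formula} (hφ : φ.Closed) (h : Trace φ ψ) :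
    ψ ∈ clE φ [] := by
  have hstepcl : ∀ χ ∈ clE φ [], ∀ χ', TraceStep χ χ' → χ' ∈ clE φ [] := by
    apply clE_step_closed (clE φ []) φ []
    · intro p hp; cases hp
    · intro p hp; cases hp
    · intro y hy; exact absurd hy (hφ y)
    · exact Finset.Subset.refl _
  induction h with
  | refl => simpa using mem_clE_self φ []
  | tail _ hstep ih => exact hstepcl _ ih _ hstep

theorem traceSet_finite {φ : Formula} (hφ : φ.Closed) :
    {ψ | Trace φ ψ}.Finite :=
  Set.Finite.subset (clE φ []).finite_toSet (fun ψ hψ => trace_mem_clE hφ hψ)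

end RankAux

/-- There is a rank function on (closed, guarded) formulas with `rank(p) =
rank(p̄) = 1`, invariance under trace-equivalence and strict decrease along
strict traces. -/
theorem exists_rank :
    ∃ rank : Formula → ℕ,
      (∀ p : ℕ, rank (.prop p) = 1) ∧
      (∀ p : ℕ, rank (.nprop p) = 1) ∧
      (∀ φ ψ : Formula, φ.Closed → φ.Guarded →
        Trace φ ψ → Trace ψ φ → rank φ = rank ψ) ∧
      (∀ φ ψ : Formula, φ.Closed → φ.Guarded →
        Trace φ ψ → ¬ Trace ψ φ → rank ψ < rank φ) := by
  refine ⟨fun φ => {ψ | Trace φ ψ}.ncard, ?_, ?_, ?_, ?_⟩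
  · intro p
    have h : {ψ | Trace (.prop p) ψ} = {Formula.prop p} := by
      ext χ
      simp only [Set.mem_setOf_eq, Set.mem_singleton_iff]
      constructor
      · intro h
        rcases Relation.ReflTransGen.cases_head h with h | ⟨c, hc, _⟩
        · exact h.symm
        · cases hc
      · rintro rfl; exact Relation.ReflTransGen.refl
    show {ψ | Trace (.prop p) ψ}.ncard = 1
    rw [h, Set.ncard_singleton]
  · intro p
    have h : {ψ | Trace (.nprop p) ψ} = {Formula.nprop p} := by
      ext χ
      simp only [Set.mem_setOf_eq, Set.mem_singleton_iff]
      constructor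
      · intro h
        rcases Relation.ReflTransGen.cases_head h with h | ⟨c, hc, _⟩
        · exact h.symm
        · cases hc
      · rintro rfl; exact Relation.ReflTransGen.refl
    show {ψ | Trace (.nprop p) ψ}.ncard = 1
    rw [h, Set.ncard_singleton]
  · intro φ ψ _ _ h1 h2
    have h : {χ | Trace φ χ} = {χ | Trace ψ χ} := by
      ext χ
      simp only [Set.mem_setOf_eq]
      exact ⟨fun h => Relation.ReflTransGen.trans h2 h,
             fun h => Relation.ReflTransGen.trans h1 h⟩
    show {χ | Trace φ χ}.ncard = {χ | Trace ψ χ}.ncard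
    rw [h]
  · intro φ ψ hcl _ h1 hn
    have hss : {χ | Trace ψ χ} ⊂ {χ | Trace φ χ} := by
      constructor
      · intro χ hχ
        exact Relation.ReflTransGen.trans h1 hχ
      · intro hsub
        exact hn (hsub (show Trace φ φ from Relation.ReflTransGen.refl))
    show {χ | Trace ψ χ}.ncard < {χ | Trace φ χ}.ncard
    exact Set.ncard_lt_ncard hss (RankAux.traceSet_finite hcl)
end

section
/- No guarded, closed, alternation-free modal μ-calculus formula is both magenta and navy; i.e., there is no formula φ such that φ →* μx.ψ and μx.ψ →* φ for some μ-formula μx.ψ, and simultaneously φ →* νy.χ and νy.χ →* φ for some ν-formula νy.χ. -/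
namespace Formula

/-- Size of a formula. -/
def size : Formula → ℕ
  | .prop _ => 1
  | .nprop _ => 1
  | .var _ => 1
  | .or a b => a.size + b.size + 1
  | .and a b => a.size + b.size + 1
  | .dia a => a.size + 1
  | .box a => a.size + 1
  | .mu _ a => a.size + 1
  | .nu _ a => a.size + 1

theorem size_pos (a : Formula) : 0 < a.size := by
  cases a <;> simp [size]

theorem freeIn_of_freeUnderNu : ∀ {γ : Formula} {x : ℕ}, γ.FreeUnderNu x → γ.FreeIn x := by
  intro γ
  induction γ <;> intro x h <;>
    simp_all [FreeUnderNu, FreeIn] <;> tauto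

theorem freeIn_of_freeUnderMu : ∀ {γ : Formula} {x : ℕ}, γ.FreeUnderMu x → γ.FreeIn x := by
  intro γ
  induction γ <;> intro x h <;>
    simp_all [FreeUnderMu, FreeIn] <;> tauto

theorem subst_of_not_free : ∀ {γ : Formula} {w : ℕ} {δ : Formula},
    ¬ γ.FreeIn w → Formula.subst w δ γ = γ := by
  intro γ
  induction γ <;> intro w δ h <;> simp_all [FreeIn, subst]

theorem not_freeIn_self_subst : ∀ {γ : Formula} {w : ℕ} {δ : Formula},
    ¬ δ.FreeIn w → ¬ (Formula.subst w δ γ).FreeIn w := by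
  intro γ
  induction γ with
  | prop p => intro w δ hδ h; simp [FreeIn, subst] at h
  | nprop p => intro w δ hδ h; simp [FreeIn, subst] at h
  | var v =>
    intro w δ hδ h
    by_cases hv : v = w
    · rw [subst, if_pos hv] at h; exact hδ h
    · rw [subst, if_neg hv] at h; exact hv h
  | or l r ih1 ih2 =>
    intro w δ hδ h
    simp only [FreeIn, subst] at h
    rcases h with h | h
    exacts [ih1 hδ h, ih2 hδ h]
  | and l r ih1 ih2 =>
    intro w δ hδ h
    simp only [FreeIn, subst] at h
    rcases h with h | h
    exacts [ih1 hδ h, ih2 hδ h]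
  | dia b ih => intro w δ hδ h; exact ih hδ h
  | box b ih => intro w δ hδ h; exact ih hδ h
  | mu v b ih =>
    intro w δ hδ h
    by_cases hv : v = w
    · rw [subst, if_pos hv] at h
      simp [FreeIn, hv] at h
    · rw [subst, if_neg hv] at h
      exact ih hδ h.2
  | nu v b ih =>
    intro w δ hδ h
    by_cases hv : v = w
    · rw [subst, if_pos hv] at h
      simp [FreeIn, hv] at h
    · rw [subst, if_neg hv] at h
      exact ih hδ h.2

theorem freeIn_subst : ∀ {γ : Formula} {w a : ℕ} {δ : Formula},
    ¬ δ.FreeIn a → (Formula.subst w δ γ).FreeIn a → γ.FreeIn a := by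
  intro γ
  induction γ with
  | prop p => intro w a δ hδ h; simpa [FreeIn, subst] using h
  | nprop p => intro w a δ hδ h; simpa [FreeIn, subst] using h
  | var v =>
    intro w a δ hδ h
    by_cases hv : v = w
    · rw [subst, if_pos hv] at h
      exact absurd (id h) hδ
    · rwa [subst, if_neg hv] at h
  | or l r ih1 ih2 =>
    intro w a δ hδ h
    simp only [FreeIn, subst] at h ⊢
    rcases h with h | h
    exacts [Or.inl (ih1 hδ h), Or.inr (ih2 hδ h)]
  | and l r ih1 ih2 =>
    intro w a δ hδ h
    simp only [FreeIn, subst] at h ⊢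
    rcases h with h | h
    exacts [Or.inl (ih1 hδ h), Or.inr (ih2 hδ h)]
  | dia b ih =>
    intro w a δ hδ h
    simp only [FreeIn, subst] at h ⊢
    exact ih hδ h
  | box b ih =>
    intro w a δ hδ h
    simp only [FreeIn, subst] at h ⊢
    exact ih hδ h
  | mu v b ih =>
    intro w a δ hδ h
    by_cases hv : v = w
    · rwa [subst, if_pos hv] at h
    · rw [subst, if_neg hv] at h
      simp only [FreeIn] at h ⊢
      exact ⟨h.1, ih hδ h.2⟩
  | nu v b ih =>
    intro w a δ hδ h
    by_cases hv : v = w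
    · rwa [subst, if_pos hv] at h
    · rw [subst, if_neg hv] at h
      simp only [FreeIn] at h ⊢
      exact ⟨h.1, ih hδ h.2⟩

theorem freeUnderNu_subst : ∀ {γ : Formula} {w a : ℕ} {δ : Formula},
    ¬ δ.FreeIn a → (Formula.subst w δ γ).FreeUnderNu a → γ.FreeUnderNu a := by
  intro γ
  induction γ with
  | prop p => intro w a δ hδ h; simpa [FreeUnderNu, subst] using h
  | nprop p => intro w a δ hδ h; simpa [FreeUnderNu, subst] using h
  | var v =>
    intro w a δ hδ h
    by_cases hv : v = w
    · rw [subst, if_pos hv] at h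
      exact absurd (freeIn_of_freeUnderNu h) hδ
    · rwa [subst, if_neg hv] at h
  | or l r ih1 ih2 =>
    intro w a δ hδ h
    simp only [FreeUnderNu, subst] at h ⊢
    rcases h with h | h
    exacts [Or.inl (ih1 hδ h), Or.inr (ih2 hδ h)]
  | and l r ih1 ih2 =>
    intro w a δ hδ h
    simp only [FreeUnderNu, subst] at h ⊢
    rcases h with h | h
    exacts [Or.inl (ih1 hδ h), Or.inr (ih2 hδ h)]
  | dia b ih =>
    intro w a δ hδ h
    simp only [FreeUnderNu, subst] at h ⊢
    exact ih hδ h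
  | box b ih =>
    intro w a δ hδ h
    simp only [FreeUnderNu, subst] at h ⊢
    exact ih hδ h
  | mu v b ih =>
    intro w a δ hδ h
    by_cases hv : v = w
    · rwa [subst, if_pos hv] at h
    · rw [subst, if_neg hv] at h
      simp only [FreeUnderNu] at h ⊢
      exact ⟨h.1, ih hδ h.2⟩
  | nu v b ih =>
    intro w a δ hδ h
    by_cases hv : v = w
    · rwa [subst, if_pos hv] at h
    · rw [subst, if_neg hv] at h
      simp only [FreeUnderNu] at h ⊢
      exact ⟨h.1, freeIn_subst hδ h.2⟩

theorem freeUnderMu_subst : ∀ {γ : Formula} {w a : ℕ} {δ : Formula},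
    ¬ δ.FreeIn a → (Formula.subst w δ γ).FreeUnderMu a → γ.FreeUnderMu a := by
  intro γ
  induction γ with
  | prop p => intro w a δ hδ h; simpa [FreeUnderMu, subst] using h
  | nprop p => intro w a δ hδ h; simpa [FreeUnderMu, subst] using h
  | var v =>
    intro w a δ hδ h
    by_cases hv : v = w
    · rw [subst, if_pos hv] at h
      exact absurd (freeIn_of_freeUnderMu h) hδ
    · rwa [subst, if_neg hv] at h
  | or l r ih1 ih2 =>
    intro w a δ hδ h
    simp only [FreeUnderMu, subst] at h ⊢
    rcases h with h | h
    exacts [Or.inl (ih1 hδ h), Or.inr (ih2 hδ h)]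
  | and l r ih1 ih2 =>
    intro w a δ hδ h
    simp only [FreeUnderMu, subst] at h ⊢
    rcases h with h | h
    exacts [Or.inl (ih1 hδ h), Or.inr (ih2 hδ h)]
  | dia b ih =>
    intro w a δ hδ h
    simp only [FreeUnderMu, subst] at h ⊢
    exact ih hδ h
  | box b ih =>
    intro w a δ hδ h
    simp only [FreeUnderMu, subst] at h ⊢
    exact ih hδ h
  | mu v b ih =>
    intro w a δ hδ h
    by_cases hv : v = w
    · rwa [subst, if_pos hv] at h
    · rw [subst, if_neg hv] at h
      simp only [FreeUnderMu] at h ⊢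
      exact ⟨h.1, freeIn_subst hδ h.2⟩
  | nu v b ih =>
    intro w a δ hδ h
    by_cases hv : v = w
    · rwa [subst, if_pos hv] at h
    · rw [subst, if_neg hv] at h
      simp only [FreeUnderMu] at h ⊢
      exact ⟨h.1, ih hδ h.2⟩

end Formula

theorem Subformula.size_le {a b : Formula} (h : Subformula a b) : a.size ≤ b.size := by
  induction h with
  | refl => exact le_refl _
  | orL _ ih => simp [Formula.size]; omega
  | orR _ ih => simp [Formula.size]; omega
  | andL _ ih => simp [Formula.size]; omega
  | andR _ ih => simp [Formula.size]; omega
  | dia _ ih => simp [Formula.size]; omega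
  | box _ ih => simp [Formula.size]; omega
  | mu _ _ ih => simp [Formula.size]; omega
  | nu _ _ ih => simp [Formula.size]; omega

theorem Subformula.eq_of_size_le {a b : Formula} (h : Subformula a b)
    (h2 : b.size ≤ a.size) : a = b := by
  cases h with
  | refl => rfl
  | orL h => have := h.size_le; have := Formula.size_pos a; simp [Formula.size] at h2; omega
  | orR h => have := h.size_le; have := Formula.size_pos a; simp [Formula.size] at h2; omega
  | andL h => have := h.size_le; have := Formula.size_pos a; simp [Formula.size] at h2; omega
  | andR h => have := h.size_le; have := Formula.size_pos a; simp [Formula.size] at h2; omega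
  | dia h => have := h.size_le; simp [Formula.size] at h2; omega
  | box h => have := h.size_le; simp [Formula.size] at h2; omega
  | mu x h => have := h.size_le; simp [Formula.size] at h2; omega
  | nu x h => have := h.size_le; simp [Formula.size] at h2; omega

/-- Subformula along a path that crosses no binder for `w`. -/
inductive SubNW (w : ℕ) : Formula → Formula → Prop
  | refl (φ) : SubNW w φ φ
  | orL {χ φ ψ} : SubNW w χ φ → SubNW w χ (.or φ ψ)
  | orR {χ φ ψ} : SubNW w χ ψ → SubNW w χ (.or φ ψ)
  | andL {χ φ ψ} : SubNW w χ φ → SubNW w χ (.and φ ψ)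
  | andR {χ φ ψ} : SubNW w χ ψ → SubNW w χ (.and φ ψ)
  | dia {χ φ} : SubNW w χ φ → SubNW w χ (.dia φ)
  | box {χ φ} : SubNW w χ φ → SubNW w χ (.box φ)
  | mu {χ φ} {x : ℕ} : x ≠ w → SubNW w χ φ → SubNW w χ (.mu x φ)
  | nu {χ φ} {x : ℕ} : x ≠ w → SubNW w χ φ → SubNW w χ (.nu x φ)

theorem SubNW.toSub {w : ℕ} {a b : Formula} (h : SubNW w a b) : Subformula a b := by
  induction h with
  | refl => exact Subformula.refl _
  | orL _ ih => exact ih.orL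
  | orR _ ih => exact ih.orR
  | andL _ ih => exact ih.andL
  | andR _ ih => exact ih.andR
  | dia _ ih => exact ih.dia
  | box _ ih => exact ih.box
  | mu _ _ ih => exact ih.mu _
  | nu _ _ ih => exact ih.nu _

/-- Characterization of subformulas of a substitution instance. -/
theorem sub_subst : ∀ {γ : Formula} {ξ δ : Formula} {w : ℕ},
    Subformula ξ (Formula.subst w δ γ) →
    Subformula ξ δ ∨ Subformula ξ γ ∨
      ∃ γ₀, SubNW w γ₀ γ ∧ ξ = Formula.subst w δ γ₀ := by
  intro γ
  induction γ with
  | prop p =>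
    intro ξ δ w h
    rw [Formula.subst] at h
    cases h
    exact Or.inr (Or.inl (Subformula.refl _))
  | nprop p =>
    intro ξ δ w h
    rw [Formula.subst] at h
    cases h
    exact Or.inr (Or.inl (Subformula.refl _))
  | var v =>
    intro ξ δ w h
    by_cases hv : v = w
    · rw [Formula.subst, if_pos hv] at h
      exact Or.inl h
    · rw [Formula.subst, if_neg hv] at h
      cases h
      exact Or.inr (Or.inl (Subformula.refl _))
  | or l r ih1 ih2 =>
    intro ξ δ w h
    rw [Formula.subst] at h
    cases h with
    | refl =>
      exact Or.inr (Or.inr ⟨.or l r, SubNW.refl _, by rw [Formula.subst]⟩)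
    | orL h =>
      rcases ih1 h with h' | h' | ⟨γ₀, hnw, heq⟩
      · exact Or.inl h'
      · exact Or.inr (Or.inl h'.orL)
      · exact Or.inr (Or.inr ⟨γ₀, hnw.orL, heq⟩)
    | orR h =>
      rcases ih2 h with h' | h' | ⟨γ₀, hnw, heq⟩
      · exact Or.inl h'
      · exact Or.inr (Or.inl h'.orR)
      · exact Or.inr (Or.inr ⟨γ₀, hnw.orR, heq⟩)
  | and l r ih1 ih2 =>
    intro ξ δ w h
    rw [Formula.subst] at h
    cases h with
    | refl =>
      exact Or.inr (Or.inr ⟨.and l r, SubNW.refl _, by rw [Formula.subst]⟩)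
    | andL h =>
      rcases ih1 h with h' | h' | ⟨γ₀, hnw, heq⟩
      · exact Or.inl h'
      · exact Or.inr (Or.inl h'.andL)
      · exact Or.inr (Or.inr ⟨γ₀, hnw.andL, heq⟩)
    | andR h =>
      rcases ih2 h with h' | h' | ⟨γ₀, hnw, heq⟩
      · exact Or.inl h'
      · exact Or.inr (Or.inl h'.andR)
      · exact Or.inr (Or.inr ⟨γ₀, hnw.andR, heq⟩)
  | dia b ih =>
    intro ξ δ w h
    rw [Formula.subst] at h
    cases h with
    | refl =>
      exact Or.inr (Or.inr ⟨.dia b, SubNW.refl _, by rw [Formula.subst]⟩)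
    | dia h =>
      rcases ih h with h' | h' | ⟨γ₀, hnw, heq⟩
      · exact Or.inl h'
      · exact Or.inr (Or.inl h'.dia)
      · exact Or.inr (Or.inr ⟨γ₀, hnw.dia, heq⟩)
  | box b ih =>
    intro ξ δ w h
    rw [Formula.subst] at h
    cases h with
    | refl =>
      exact Or.inr (Or.inr ⟨.box b, SubNW.refl _, by rw [Formula.subst]⟩)
    | box h =>
      rcases ih h with h' | h' | ⟨γ₀, hnw, heq⟩
      · exact Or.inl h'
      · exact Or.inr (Or.inl h'.box)
      · exact Or.inr (Or.inr ⟨γ₀, hnw.box, heq⟩)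
  | mu v b ih =>
    intro ξ δ w h
    by_cases hv : v = w
    · rw [Formula.subst, if_pos hv] at h
      exact Or.inr (Or.inl h)
    · rw [Formula.subst, if_neg hv] at h
      cases h with
      | refl =>
        exact Or.inr (Or.inr ⟨.mu v b, SubNW.refl _, by rw [Formula.subst, if_neg hv]⟩)
      | mu _ h =>
        rcases ih h with h' | h' | ⟨γ₀, hnw, heq⟩
        · exact Or.inl h'
        · exact Or.inr (Or.inl (h'.mu _))
        · exact Or.inr (Or.inr ⟨γ₀, hnw.mu hv, heq⟩)
  | nu v b ih =>
    intro ξ δ w h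
    by_cases hv : v = w
    · rw [Formula.subst, if_pos hv] at h
      exact Or.inr (Or.inl h)
    · rw [Formula.subst, if_neg hv] at h
      cases h with
      | refl =>
        exact Or.inr (Or.inr ⟨.nu v b, SubNW.refl _, by rw [Formula.subst, if_neg hv]⟩)
      | nu _ h =>
        rcases ih h with h' | h' | ⟨γ₀, hnw, heq⟩
        · exact Or.inl h'
        · exact Or.inr (Or.inl (h'.nu _))
        · exact Or.inr (Or.inr ⟨γ₀, hnw.nu hv, heq⟩)

/-- `w` free under a μ-subformula reached without crossing a `w`-binder. -/
theorem freeUnderMu_of_subNW {w a : ℕ} {b γ : Formula}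
    (h : SubNW w (.mu a b) γ) (ha : a ≠ w) (hf : b.FreeIn w) : γ.FreeUnderMu w := by
  induction h with
  | refl => exact ⟨ha, hf⟩
  | orL _ ih => exact Or.inl ih
  | orR _ ih => exact Or.inr ih
  | andL _ ih => exact Or.inl ih
  | andR _ ih => exact Or.inr ih
  | dia _ ih => exact ih
  | box _ ih => exact ih
  | mu hx _ ih => exact ⟨hx, Formula.freeIn_of_freeUnderMu ih⟩
  | nu hx _ ih => exact ⟨hx, ih⟩

theorem freeUnderNu_of_subNW {w a : ℕ} {b γ : Formula}
    (h : SubNW w (.nu a b) γ) (ha : a ≠ w) (hf : b.FreeIn w) : γ.FreeUnderNu w := by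
  induction h with
  | refl => exact ⟨ha, hf⟩
  | orL _ ih => exact Or.inl ih
  | orR _ ih => exact Or.inr ih
  | andL _ ih => exact Or.inl ih
  | andR _ ih => exact Or.inr ih
  | dia _ ih => exact ih
  | box _ ih => exact ih
  | mu hx _ ih => exact ⟨hx, ih⟩
  | nu hx _ ih => exact ⟨hx, Formula.freeIn_of_freeUnderNu ih⟩

theorem size_subst_le {γ : Formula} {w : ℕ} {δ : Formula} (hf : γ.FreeIn w) :
    δ.size ≤ (Formula.subst w δ γ).size := by
  induction γ with
  | prop p => simp [Formula.FreeIn] at hf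
  | nprop p => simp [Formula.FreeIn] at hf
  | var v =>
    have hv : v = w := hf
    rw [Formula.subst, if_pos hv]
  | or l r ih1 ih2 =>
    rcases hf with hf | hf
    · have := ih1 hf; rw [Formula.subst]; simp [Formula.size]; omega
    · have := ih2 hf; rw [Formula.subst]; simp [Formula.size]; omega
  | and l r ih1 ih2 =>
    rcases hf with hf | hf
    · have := ih1 hf; rw [Formula.subst]; simp [Formula.size]; omega
    · have := ih2 hf; rw [Formula.subst]; simp [Formula.size]; omega
  | dia b ih =>
    have := ih hf; rw [Formula.subst]; simp [Formula.size]; omega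
  | box b ih =>
    have := ih hf; rw [Formula.subst]; simp [Formula.size]; omega
  | mu v b ih =>
    obtain ⟨hv, hf⟩ := hf
    have hv' : ¬ v = w := hv
    have := ih hf; rw [Formula.subst, if_neg hv']; simp [Formula.size]; omega
  | nu v b ih =>
    obtain ⟨hv, hf⟩ := hf
    have hv' : ¬ v = w := hv
    have := ih hf; rw [Formula.subst, if_neg hv']; simp [Formula.size]; omega

theorem size_subst_lt {γ : Formula} {w : ℕ} {δ : Formula} (hf : γ.FreeIn w)
    (hne : γ ≠ .var w) : δ.size < (Formula.subst w δ γ).size := by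
  cases γ with
  | prop p => simp [Formula.FreeIn] at hf
  | nprop p => simp [Formula.FreeIn] at hf
  | var v => exact absurd (by rw [show v = w from hf]) hne
  | or l r =>
    rcases hf with hf | hf
    · have := size_subst_le (δ := δ) hf
      have := Formula.size_pos (Formula.subst w δ r)
      rw [Formula.subst]; simp [Formula.size]; omega
    · have := size_subst_le (δ := δ) hf
      have := Formula.size_pos (Formula.subst w δ l)
      rw [Formula.subst]; simp [Formula.size]; omega
  | and l r =>
    rcases hf with hf | hf
    · have := size_subst_le (δ := δ) hf
      have := Formula.size_pos (Formula.subst w δ r)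
      rw [Formula.subst]; simp [Formula.size]; omega
    · have := size_subst_le (δ := δ) hf
      have := Formula.size_pos (Formula.subst w δ l)
      rw [Formula.subst]; simp [Formula.size]; omega
  | dia b =>
    have := size_subst_le (γ := b) (δ := δ) hf
    rw [Formula.subst]; simp [Formula.size]; omega
  | box b =>
    have := size_subst_le (γ := b) (δ := δ) hf
    rw [Formula.subst]; simp [Formula.size]; omega
  | mu v b =>
    obtain ⟨hv, hf⟩ := hf
    have hv' : ¬ v = w := hv
    have := size_subst_le (δ := δ) hf
    rw [Formula.subst, if_neg hv']; simp [Formula.size]; omega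
  | nu v b =>
    obtain ⟨hv, hf⟩ := hf
    have hv' : ¬ v = w := hv
    have := size_subst_le (δ := δ) hf
    rw [Formula.subst, if_neg hv']; simp [Formula.size]; omega

theorem closed_step {θ θ' : Formula} (h : TraceStep θ θ') (hc : θ.Closed) : θ'.Closed := by
  cases h with
  | orL φ ψ => intro a ha; exact hc a (Or.inl ha)
  | orR φ ψ => intro a ha; exact hc a (Or.inr ha)
  | andL φ ψ => intro a ha; exact hc a (Or.inl ha)
  | andR φ ψ => intro a ha; exact hc a (Or.inr ha)
  | dia φ => intro a ha; exact hc a ha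
  | box φ => intro a ha; exact hc a ha
  | mu x φ =>
    intro a ha
    by_cases hax : a = x
    · subst hax
      exact Formula.not_freeIn_self_subst (hc a) ha
    · have := Formula.freeIn_subst (hc a) ha
      exact hc a ⟨Ne.symm hax, this⟩
  | nu x φ =>
    intro a ha
    by_cases hax : a = x
    · subst hax
      exact Formula.not_freeIn_self_subst (hc a) ha
    · have := Formula.freeIn_subst (hc a) ha
      exact hc a ⟨Ne.symm hax, this⟩

/-- The key substitution lemma for alternation freeness: substituting a closed,
alternation-free formula `δ` (whose subformulas include those of `φ`) keeps
alternation freeness. -/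
theorem af_subst {φ δ : Formula} {x : ℕ} (hcl : δ.Closed) (haf : AlternationFree δ)
    (hφ : ∀ ξ, Subformula ξ φ → Subformula ξ δ) :
    AlternationFree (Formula.subst x δ φ) := by
  constructor
  · intro a b hs hbad
    rcases sub_subst hs with h1 | h2 | ⟨γ₀, hnw, heq⟩
    · exact haf.1 a b h1 hbad
    · exact haf.1 a b (hφ _ h2) hbad
    · cases γ₀ with
      | var v =>
        by_cases hv : v = x
        · rw [Formula.subst, if_pos hv] at heq
          exact haf.1 a b (heq ▸ Subformula.refl _) hbad
        · rw [Formula.subst, if_neg hv] at heq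
          cases heq
      | mu a₀ b₀ =>
        by_cases hv : a₀ = x
        · rw [Formula.subst, if_pos hv] at heq
          cases heq
          exact haf.1 a b (hφ _ hnw.toSub) hbad
        · rw [Formula.subst, if_neg hv] at heq
          cases heq
          have : b₀.FreeUnderNu a := Formula.freeUnderNu_subst (hcl a) hbad
          exact haf.1 a b₀ (hφ _ hnw.toSub) this
      | prop p => rw [Formula.subst] at heq; cases heq
      | nprop p => rw [Formula.subst] at heq; cases heq
      | or l r => rw [Formula.subst] at heq; cases heq
      | and l r => rw [Formula.subst] at heq; cases heq
      | dia c => rw [Formula.subst] at heq; cases heq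
      | box c => rw [Formula.subst] at heq; cases heq
      | nu a₀ b₀ =>
        by_cases hv : a₀ = x
        · rw [Formula.subst, if_pos hv] at heq; cases heq
        · rw [Formula.subst, if_neg hv] at heq; cases heq
  · intro a b hs hbad
    rcases sub_subst hs with h1 | h2 | ⟨γ₀, hnw, heq⟩
    · exact haf.2 a b h1 hbad
    · exact haf.2 a b (hφ _ h2) hbad
    · cases γ₀ with
      | var v =>
        by_cases hv : v = x
        · rw [Formula.subst, if_pos hv] at heq
          exact haf.2 a b (heq ▸ Subformula.refl _) hbad
        · rw [Formula.subst, if_neg hv] at heq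
          cases heq
      | nu a₀ b₀ =>
        by_cases hv : a₀ = x
        · rw [Formula.subst, if_pos hv] at heq
          cases heq
          exact haf.2 a b (hφ _ hnw.toSub) hbad
        · rw [Formula.subst, if_neg hv] at heq
          cases heq
          have : b₀.FreeUnderMu a := Formula.freeUnderMu_subst (hcl a) hbad
          exact haf.2 a b₀ (hφ _ hnw.toSub) this
      | prop p => rw [Formula.subst] at heq; cases heq
      | nprop p => rw [Formula.subst] at heq; cases heq
      | or l r => rw [Formula.subst] at heq; cases heq
      | and l r => rw [Formula.subst] at heq; cases heq
      | dia c => rw [Formula.subst] at heq; cases heq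
      | box c => rw [Formula.subst] at heq; cases heq
      | mu a₀ b₀ =>
        by_cases hv : a₀ = x
        · rw [Formula.subst, if_pos hv] at heq; cases heq
        · rw [Formula.subst, if_neg hv] at heq; cases heq

theorem af_step {θ θ' : Formula} (h : TraceStep θ θ') (hc : θ.Closed)
    (haf : AlternationFree θ) : AlternationFree θ' := by
  cases h with
  | orL φ ψ => exact ⟨fun a b hs => haf.1 a b hs.orL, fun a b hs => haf.2 a b hs.orL⟩
  | orR φ ψ => exact ⟨fun a b hs => haf.1 a b hs.orR, fun a b hs => haf.2 a b hs.orR⟩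
  | andL φ ψ => exact ⟨fun a b hs => haf.1 a b hs.andL, fun a b hs => haf.2 a b hs.andL⟩
  | andR φ ψ => exact ⟨fun a b hs => haf.1 a b hs.andR, fun a b hs => haf.2 a b hs.andR⟩
  | dia φ => exact ⟨fun a b hs => haf.1 a b hs.dia, fun a b hs => haf.2 a b hs.dia⟩
  | box φ => exact ⟨fun a b hs => haf.1 a b hs.box, fun a b hs => haf.2 a b hs.box⟩
  | mu x φ => exact af_subst hc haf (fun ξ hs => hs.mu x)
  | nu x φ => exact af_subst hc haf (fun ξ hs => hs.nu x)

theorem trace_pres {θ θ' : Formula} (h : Trace θ θ')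
    (hc : θ.Closed) (haf : AlternationFree θ) : θ'.Closed ∧ AlternationFree θ' := by
  induction h with
  | refl => exact ⟨hc, haf⟩
  | tail _ hstep ih => exact ⟨closed_step hstep ih.1, af_step hstep ih.1 ih.2⟩

/-- `δ` creates `ξ` by unfolding: `ξ` is obtained by substituting `δ` into a
subformula of the body of `δ` in which the recursion variable occurs free. -/
def Creates (δ ξ : Formula) : Prop :=
  ∃ w γ γ₀, (δ = .mu w γ ∨ δ = .nu w γ) ∧ SubNW w γ₀ γ ∧ γ₀.FreeIn w ∧
    γ₀ ≠ .var w ∧ ξ = Formula.subst w δ γ₀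

theorem step_sub {θ θ' ξ : Formula} (h : TraceStep θ θ') (hs : Subformula ξ θ') :
    Subformula ξ θ ∨ Creates θ ξ := by
  cases h with
  | orL φ ψ => exact Or.inl hs.orL
  | orR φ ψ => exact Or.inl hs.orR
  | andL φ ψ => exact Or.inl hs.andL
  | andR φ ψ => exact Or.inl hs.andR
  | dia φ => exact Or.inl hs.dia
  | box φ => exact Or.inl hs.box
  | mu x φ =>
    rcases sub_subst hs with h1 | h2 | ⟨γ₀, hnw, heq⟩
    · exact Or.inl h1
    · exact Or.inl (h2.mu x)
    · by_cases hf : γ₀.FreeIn x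
      · by_cases hv : γ₀ = .var x
        · subst hv
          rw [Formula.subst, if_pos rfl] at heq
          exact Or.inl (heq ▸ Subformula.refl _)
        · exact Or.inr ⟨x, φ, γ₀, Or.inl rfl, hnw, hf, hv, heq⟩
      · rw [Formula.subst_of_not_free hf] at heq
        exact Or.inl ((heq ▸ hnw.toSub).mu x)
  | nu x φ =>
    rcases sub_subst hs with h1 | h2 | ⟨γ₀, hnw, heq⟩
    · exact Or.inl h1
    · exact Or.inl (h2.nu x)
    · by_cases hf : γ₀.FreeIn x
      · by_cases hv : γ₀ = .var x
        · subst hv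
          rw [Formula.subst, if_pos rfl] at heq
          exact Or.inl (heq ▸ Subformula.refl _)
        · exact Or.inr ⟨x, φ, γ₀, Or.inr rfl, hnw, hf, hv, heq⟩
      · rw [Formula.subst_of_not_free hf] at heq
        exact Or.inl ((heq ▸ hnw.toSub).nu x)

theorem trace_sub {θ₁ θ₂ ξ : Formula} (h : Trace θ₁ θ₂) (hs : Subformula ξ θ₂) :
    Subformula ξ θ₁ ∨ ∃ δ, Trace θ₁ δ ∧ Trace δ θ₂ ∧ Creates δ ξ := by
  induction h using Relation.ReflTransGen.head_induction_on with
  | refl => exact Or.inl hs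
  | head hstep htail ih =>
    rename_i c d
    rcases ih with h1 | ⟨δ, t1, t2, hcr⟩
    · rcases step_sub hstep h1 with h2 | hcr
      · exact Or.inl h2
      · exact Or.inr ⟨c, Relation.ReflTransGen.refl,
          Relation.ReflTransGen.head hstep htail, hcr⟩
    · exact Or.inr ⟨δ, Relation.ReflTransGen.head hstep t1, t2, hcr⟩

/-- In an alternation-free setting, a creator of a μ-rooted formula is itself
μ-rooted (and strictly smaller). -/
theorem creates_mu {δ : Formula} {a : ℕ} {b : Formula} (hc : Creates δ (.mu a b))
    (haf : AlternationFree δ) :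
    (∃ c d, δ = Formula.mu c d) ∧ δ.size < (Formula.mu a b).size := by
  obtain ⟨w, γ, γ₀, hδ, hnw, hfree, hne, hsub⟩ := hc
  have hsize : δ.size < (Formula.mu a b).size := by
    rw [hsub]; exact size_subst_lt hfree hne
  refine ⟨?_, hsize⟩
  cases γ₀ with
  | var v => exact absurd (by rw [show v = w from hfree]) hne
  | mu a₀ b₀ =>
    rcases hδ with rfl | rfl
    · exact ⟨w, γ, rfl⟩
    · obtain ⟨ha₀, hf₀⟩ := hfree
      have : γ.FreeUnderMu w := freeUnderMu_of_subNW hnw ha₀ hf₀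
      exact absurd this (haf.2 w γ (Subformula.refl _))
  | prop p => rw [Formula.subst] at hsub; cases hsub
  | nprop p => rw [Formula.subst] at hsub; cases hsub
  | or l r => rw [Formula.subst] at hsub; cases hsub
  | and l r => rw [Formula.subst] at hsub; cases hsub
  | dia c => rw [Formula.subst] at hsub; cases hsub
  | box c => rw [Formula.subst] at hsub; cases hsub
  | nu a₀ b₀ =>
    obtain ⟨ha₀, hf₀⟩ := hfree
    have ha₀' : ¬ a₀ = w := ha₀
    rw [Formula.subst, if_neg ha₀'] at hsub
    cases hsub

theorem creates_nu {δ : Formula} {a : ℕ} {b : Formula} (hc : Creates δ (.nu a b))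
    (haf : AlternationFree δ) :
    (∃ c d, δ = Formula.nu c d) ∧ δ.size < (Formula.nu a b).size := by
  obtain ⟨w, γ, γ₀, hδ, hnw, hfree, hne, hsub⟩ := hc
  have hsize : δ.size < (Formula.nu a b).size := by
    rw [hsub]; exact size_subst_lt hfree hne
  refine ⟨?_, hsize⟩
  cases γ₀ with
  | var v => exact absurd (by rw [show v = w from hfree]) hne
  | nu a₀ b₀ =>
    rcases hδ with rfl | rfl
    · obtain ⟨ha₀, hf₀⟩ := hfree
      have : γ.FreeUnderNu w := freeUnderNu_of_subNW hnw ha₀ hf₀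
      exact absurd this (haf.1 w γ (Subformula.refl _))
    · exact ⟨w, γ, rfl⟩
  | prop p => rw [Formula.subst] at hsub; cases hsub
  | nprop p => rw [Formula.subst] at hsub; cases hsub
  | or l r => rw [Formula.subst] at hsub; cases hsub
  | and l r => rw [Formula.subst] at hsub; cases hsub
  | dia c => rw [Formula.subst] at hsub; cases hsub
  | box c => rw [Formula.subst] at hsub; cases hsub
  | mu a₀ b₀ =>
    obtain ⟨ha₀, hf₀⟩ := hfree
    have ha₀' : ¬ a₀ = w := ha₀
    rw [Formula.subst, if_neg ha₀'] at hsub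
    cases hsub

/-- On a trace cycle through `σ0`, any μ-rooted formula yields a μ-rooted
formula which is a subformula of every formula on the cycle. -/
theorem mu_core (σ0 : Formula)
    (H : ∀ θ, Trace σ0 θ → Trace θ σ0 → AlternationFree θ) :
    ∀ n ξ, ξ.size ≤ n → Trace σ0 ξ → Trace ξ σ0 → (∃ a b, ξ = Formula.mu a b) →
      ∃ ζ, (∃ a b, ζ = Formula.mu a b) ∧ Trace σ0 ζ ∧ Trace ζ σ0 ∧
        ∀ θ, Trace σ0 θ → Trace θ σ0 → Subformula ζ θ := by
  intro n
  induction n with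
  | zero =>
    intro ξ hsz
    exact absurd hsz (by have := Formula.size_pos ξ; omega)
  | succ n ih =>
    intro ξ hsz h1 h2 hmu
    by_cases hall : ∀ θ, Trace σ0 θ → Trace θ σ0 → Subformula ξ θ
    · exact ⟨ξ, hmu, h1, h2, hall⟩
    · push_neg at hall
      obtain ⟨θ₀, t1, t2, hns⟩ := hall
      have hto : Trace θ₀ ξ := Relation.ReflTransGen.trans t2 h1
      rcases trace_sub hto (Subformula.refl ξ) with hs | ⟨δ, d1, d2, hcr⟩
      · exact absurd hs hns
      · have hδ1 : Trace σ0 δ := Relation.ReflTransGen.trans t1 d1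
        have hδ2 : Trace δ σ0 := Relation.ReflTransGen.trans d2 h2
        obtain ⟨a, b, rfl⟩ := hmu
        obtain ⟨hδmu, hlt⟩ := creates_mu hcr (H δ hδ1 hδ2)
        exact ih δ (by omega) hδ1 hδ2 hδmu

theorem nu_core (σ0 : Formula)
    (H : ∀ θ, Trace σ0 θ → Trace θ σ0 → AlternationFree θ) :
    ∀ n ξ, ξ.size ≤ n → Trace σ0 ξ → Trace ξ σ0 → (∃ a b, ξ = Formula.nu a b) →
      ∃ ζ, (∃ a b, ζ = Formula.nu a b) ∧ Trace σ0 ζ ∧ Trace ζ σ0 ∧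
        ∀ θ, Trace σ0 θ → Trace θ σ0 → Subformula ζ θ := by
  intro n
  induction n with
  | zero =>
    intro ξ hsz
    exact absurd hsz (by have := Formula.size_pos ξ; omega)
  | succ n ih =>
    intro ξ hsz h1 h2 hnu
    by_cases hall : ∀ θ, Trace σ0 θ → Trace θ σ0 → Subformula ξ θ
    · exact ⟨ξ, hnu, h1, h2, hall⟩
    · push_neg at hall
      obtain ⟨θ₀, t1, t2, hns⟩ := hall
      have hto : Trace θ₀ ξ := Relation.ReflTransGen.trans t2 h1
      rcases trace_sub hto (Subformula.refl ξ) with hs | ⟨δ, d1, d2, hcr⟩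
      · exact absurd hs hns
      · have hδ1 : Trace σ0 δ := Relation.ReflTransGen.trans t1 d1
        have hδ2 : Trace δ σ0 := Relation.ReflTransGen.trans d2 h2
        obtain ⟨a, b, rfl⟩ := hnu
        obtain ⟨hδnu, hlt⟩ := creates_nu hcr (H δ hδ1 hδ2)
        exact ih δ (by omega) hδ1 hδ2 hδnu

/-- No guarded, closed, alternation-free formula is both magenta (trace
equivalent to a μ-formula) and navy (trace equivalent to a ν-formula). -/
theorem not_magenta_and_navy (φ : Formula) (hclosed : φ.Closed)
    (hguarded : φ.Guarded) (hfree : AlternationFree φ) :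
    ¬ ((∃ x ψ, Trace φ (.mu x ψ) ∧ Trace (.mu x ψ) φ) ∧
       (∃ y χ, Trace φ (.nu y χ) ∧ Trace (.nu y χ) φ)) := by
  rintro ⟨⟨x, ψ, hm1, hm2⟩, ⟨y, χ, hn1, hn2⟩⟩
  set σ0 : Formula := Formula.mu x ψ with hσ0
  have H : ∀ θ, Trace σ0 θ → Trace θ σ0 → AlternationFree θ := by
    intro θ h1 _
    exact (trace_pres (Relation.ReflTransGen.trans hm1 h1) hclosed hfree).2
  have hμ := mu_core σ0 H σ0.size σ0 (le_refl _)
    Relation.ReflTransGen.refl Relation.ReflTransGen.refl ⟨x, ψ, rfl⟩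
  have hτ1 : Trace σ0 (Formula.nu y χ) := Relation.ReflTransGen.trans hm2 hn1
  have hτ2 : Trace (Formula.nu y χ) σ0 := Relation.ReflTransGen.trans hn2 hm1
  have hν := nu_core σ0 H (Formula.nu y χ).size (Formula.nu y χ) (le_refl _)
    hτ1 hτ2 ⟨y, χ, rfl⟩
  obtain ⟨ζμ, ⟨a, b, rfl⟩, cμ1, cμ2, hμall⟩ := hμ
  obtain ⟨ζν, ⟨c, d, rfl⟩, cν1, cν2, hνall⟩ := hν
  have s1 : Subformula (Formula.mu a b) (Formula.nu c d) := hμall _ cν1 cν2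
  have s2 : Subformula (Formula.nu c d) (Formula.mu a b) := hνall _ cμ1 cμ2
  have := s1.eq_of_size_le s2.size_le
  cases this
end

section
/- On every finite trace χ_1, ..., χ_n of modal μ-calculus formulas there is an index i such that χ_i is a subformula of every formula on the trace, and moreover χ_i can be chosen to be a fixpoint formula whenever χ_n is a fixpoint formula. -/
/-- A formula is a fixpoint formula. -/
def Formula.IsFixpoint (φ : Formula) : Prop :=
  ∃ x ψ, φ = Formula.mu x ψ ∨ φ = Formula.nu x ψ

theorem Subformula.trans {a b c : Formula} (h1 : Subformula a b) (h2 : Subformula b c) :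
    Subformula a c := by
  induction h2 with
  | refl => exact h1
  | orL _ ih => exact .orL ih
  | orR _ ih => exact .orR ih
  | andL _ ih => exact .andL ih
  | andR _ ih => exact .andR ih
  | dia _ ih => exact .dia ih
  | box _ ih => exact .box ih
  | mu x _ ih => exact .mu x ih
  | nu x _ ih => exact .nu x ih

theorem subst_of_not_free {x : ℕ} {δ : Formula} :
    ∀ {φ : Formula}, ¬ φ.FreeIn x → Formula.subst x δ φ = φ := by
  intro φ
  induction φ with
  | prop p => intro; rfl
  | nprop p => intro; rfl
  | var y => intro h; simp [Formula.FreeIn] at h; simp [Formula.subst, h]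
  | or φ ψ ih1 ih2 =>
      intro h; simp [Formula.FreeIn] at h
      simp [Formula.subst, ih1 h.1, ih2 h.2]
  | and φ ψ ih1 ih2 =>
      intro h; simp [Formula.FreeIn] at h
      simp [Formula.subst, ih1 h.1, ih2 h.2]
  | dia φ ih => intro h; simp only [Formula.subst, ih h]
  | box φ ih => intro h; simp only [Formula.subst, ih h]
  | mu y φ ih =>
      intro h; simp only [Formula.FreeIn] at h
      by_cases hyx : y = x
      · simp [Formula.subst, hyx]
      · simp only [Formula.subst, if_neg hyx]
        rw [ih (fun hf => h ⟨hyx, hf⟩)]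
  | nu y φ ih =>
      intro h; simp only [Formula.FreeIn] at h
      by_cases hyx : y = x
      · simp [Formula.subst, hyx]
      · simp only [Formula.subst, if_neg hyx]
        rw [ih (fun hf => h ⟨hyx, hf⟩)]

theorem sub_subst_of_free {x : ℕ} {δ : Formula} :
    ∀ {φ : Formula}, φ.FreeIn x → Subformula δ (Formula.subst x δ φ) := by
  intro φ
  induction φ with
  | prop p => intro h; exact absurd h id
  | nprop p => intro h; exact absurd h id
  | var y => intro h; simp [Formula.FreeIn] at h; simp [Formula.subst, h]; exact .refl δ
  | or φ ψ ih1 ih2 =>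
      rintro (h | h)
      · exact .orL (ih1 h)
      · exact .orR (ih2 h)
  | and φ ψ ih1 ih2 =>
      rintro (h | h)
      · exact .andL (ih1 h)
      · exact .andR (ih2 h)
  | dia φ ih => intro h; exact .dia (ih h)
  | box φ ih => intro h; exact .box (ih h)
  | mu y φ ih =>
      rintro ⟨hyx, h⟩
      simp only [Formula.subst, if_neg hyx]
      exact .mu y (ih h)
  | nu y φ ih =>
      rintro ⟨hyx, h⟩
      simp only [Formula.subst, if_neg hyx]
      exact .nu y (ih h)

theorem sub_of_sub_subst {x : ℕ} {δ : Formula} :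
    ∀ {φ χ : Formula}, Subformula χ (Formula.subst x δ φ) →
      Subformula χ δ ∨ Subformula δ χ ∨ Subformula χ φ := by
  intro φ
  induction φ with
  | prop p => intro χ h; exact Or.inr (Or.inr h)
  | nprop p => intro χ h; exact Or.inr (Or.inr h)
  | var y =>
      intro χ h
      by_cases hyx : y = x
      · simp only [Formula.subst, if_pos hyx] at h; exact Or.inl h
      · simp only [Formula.subst, if_neg hyx] at h; exact Or.inr (Or.inr h)
  | or φ ψ ih1 ih2 =>
      intro χ h
      cases h with
      | refl =>
          by_cases hf : Formula.FreeIn x (Formula.or φ ψ)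
          · exact Or.inr (Or.inl (sub_subst_of_free hf))
          · rw [subst_of_not_free hf]; exact Or.inr (Or.inr (.refl _))
      | orL h => rcases ih1 h with h | h | h
                 · exact Or.inl h
                 · exact Or.inr (Or.inl h)
                 · exact Or.inr (Or.inr (.orL h))
      | orR h => rcases ih2 h with h | h | h
                 · exact Or.inl h
                 · exact Or.inr (Or.inl h)
                 · exact Or.inr (Or.inr (.orR h))
  | and φ ψ ih1 ih2 =>
      intro χ h
      cases h with
      | refl =>
          by_cases hf : Formula.FreeIn x (Formula.and φ ψ)
          · exact Or.inr (Or.inl (sub_subst_of_free hf))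
          · rw [subst_of_not_free hf]; exact Or.inr (Or.inr (.refl _))
      | andL h => rcases ih1 h with h | h | h
                  · exact Or.inl h
                  · exact Or.inr (Or.inl h)
                  · exact Or.inr (Or.inr (.andL h))
      | andR h => rcases ih2 h with h | h | h
                  · exact Or.inl h
                  · exact Or.inr (Or.inl h)
                  · exact Or.inr (Or.inr (.andR h))
  | dia φ ih =>
      intro χ h
      cases h with
      | refl =>
          by_cases hf : Formula.FreeIn x (Formula.dia φ)
          · exact Or.inr (Or.inl (sub_subst_of_free hf))
          · rw [subst_of_not_free hf]; exact Or.inr (Or.inr (.refl _))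
      | dia h => rcases ih h with h | h | h
                 · exact Or.inl h
                 · exact Or.inr (Or.inl h)
                 · exact Or.inr (Or.inr (.dia h))
  | box φ ih =>
      intro χ h
      cases h with
      | refl =>
          by_cases hf : Formula.FreeIn x (Formula.box φ)
          · exact Or.inr (Or.inl (sub_subst_of_free hf))
          · rw [subst_of_not_free hf]; exact Or.inr (Or.inr (.refl _))
      | box h => rcases ih h with h | h | h
                 · exact Or.inl h
                 · exact Or.inr (Or.inl h)
                 · exact Or.inr (Or.inr (.box h))
  | mu y φ ih =>
      intro χ h
      by_cases hyx : y = x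
      · simp only [Formula.subst, if_pos hyx] at h
        exact Or.inr (Or.inr h)
      · simp only [Formula.subst, if_neg hyx] at h
        cases h with
        | refl =>
            by_cases hf : Formula.FreeIn x (Formula.mu y φ)
            · have := sub_subst_of_free (δ := δ) hf
              simp only [Formula.subst, if_neg hyx] at this
              exact Or.inr (Or.inl this)
            · have := subst_of_not_free (δ := δ) hf
              simp only [Formula.subst, if_neg hyx] at this
              rw [this]; exact Or.inr (Or.inr (.refl _))
        | mu _ h => rcases ih h with h | h | h
                    · exact Or.inl h
                    · exact Or.inr (Or.inl h)
                    · exact Or.inr (Or.inr (.mu y h))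
  | nu y φ ih =>
      intro χ h
      by_cases hyx : y = x
      · simp only [Formula.subst, if_pos hyx] at h
        exact Or.inr (Or.inr h)
      · simp only [Formula.subst, if_neg hyx] at h
        cases h with
        | refl =>
            by_cases hf : Formula.FreeIn x (Formula.nu y φ)
            · have := sub_subst_of_free (δ := δ) hf
              simp only [Formula.subst, if_neg hyx] at this
              exact Or.inr (Or.inl this)
            · have := subst_of_not_free (δ := δ) hf
              simp only [Formula.subst, if_neg hyx] at this
              rw [this]; exact Or.inr (Or.inr (.refl _))
        | nu _ h => rcases ih h with h | h | h
                    · exact Or.inl h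
                    · exact Or.inr (Or.inl h)
                    · exact Or.inr (Or.inr (.nu y h))

theorem step_key {a b χ : Formula} (hstep : TraceStep a b) (hχ : Subformula χ b) :
    Subformula χ a ∨ (Subformula a χ ∧ a.IsFixpoint) := by
  cases hstep with
  | orL φ ψ => exact Or.inl (.orL hχ)
  | orR φ ψ => exact Or.inl (.orR hχ)
  | andL φ ψ => exact Or.inl (.andL hχ)
  | andR φ ψ => exact Or.inl (.andR hχ)
  | dia φ => exact Or.inl (.dia hχ)
  | box φ => exact Or.inl (.box hχ)
  | mu x φ =>
      rcases sub_of_sub_subst hχ with h | h | h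
      · exact Or.inl h
      · exact Or.inr ⟨h, x, φ, Or.inl rfl⟩
      · exact Or.inl (.mu x h)
  | nu x φ =>
      rcases sub_of_sub_subst hχ with h | h | h
      · exact Or.inl h
      · exact Or.inr ⟨h, x, φ, Or.inr rfl⟩
      · exact Or.inl (.nu x h)

/-- On every finite trace there is a formula that is a subformula of every
formula on the trace, which can be chosen to be a fixpoint formula whenever the
last formula of the trace is one. -/
theorem trace_has_common_subformula (l : List Formula) (hne : l ≠ [])
    (htrace : l.Chain' TraceStep) :
    ∃ i : Fin l.length,
      (∀ j : Fin l.length, Subformula (l.get i) (l.get j)) ∧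
      ((l.getLast hne).IsFixpoint → (l.get i).IsFixpoint) := by
  induction l with
  | nil => exact absurd rfl hne
  | cons a t ih =>
    cases t with
    | nil =>
      refine ⟨⟨0, by simp⟩, fun j => ?_, fun h => ?_⟩
      · obtain ⟨jv, hj⟩ := j
        simp only [List.length_singleton] at hj
        interval_cases jv
        exact .refl a
      · simpa [List.getLast] using h
    | cons b t' =>
      simp only [List.Chain', List.isChain_cons_cons] at htrace
      obtain ⟨i, hi, hfix⟩ := ih (by simp) htrace.2
      have hlast : (a :: b :: t').getLast hne = (b :: t').getLast (by simp) :=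
        List.getLast_cons _
      have hχb : Subformula ((b :: t').get i) b := hi ⟨0, by simp⟩
      rcases step_key htrace.1 hχb with h | ⟨h, hfp⟩
      · refine ⟨i.succ, fun j => ?_, ?_⟩
        · induction j using Fin.cases with
          | zero => simpa using h
          | succ k => simpa using hi k
        · rw [hlast]; simpa using hfix
      · refine ⟨⟨0, by simp⟩, fun j => ?_, fun _ => hfp⟩
        induction j using Fin.cases with
        | zero => exact .refl a
        | succ k => exact Subformula.trans h (by simpa using hi k)
end

section
/- If every element of a finite sequence of sequents is a multiset over a fixed finite set X, and the sequence has length strictly greater than the maximal length of (f,t)-controlled bad sequences over multisets of X ordered by inclusion (with f(n) = n + 2 and t the norm of the first sequent), and consecutive sequents satisfy |Σ_{n+1}|_∞ ≤ |Σ_n|_∞ + 2, then there exist indices i < j with Σ_i ⊆ Σ_j. -/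
/-- The infinity norm of a multiset over a finite set: the maximal
multiplicity. -/
def multisetNormInf {X : Type*} [Fintype X] [DecidableEq X] (A : Multiset X) : ℕ :=
  Finset.univ.sup A.count

/-- If a finite sequence of sequents (multisets over a finite set `X`) has
consecutive norms growing by at most `2` and is longer than the maximal length
`N` of `(f,t)`-controlled bad sequences over multisets of `X` ordered by
inclusion (with `f(n) = n + 2` and `t` the norm of the first sequent), then
some earlier sequent is included in a later one. -/
theorem sequent_sequence_has_inclusion
    (X : Type*) [Fintype X] [DecidableEq X]
    (L : ℕ) (Seq : Fin L → Multiset X)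
    (N : ℕ) (hL : N < L)
    (hN : ∀ (m : ℕ) (B : Fin m → Multiset X),
      (∀ i j : Fin m, i < j → ¬ B i ≤ B j) →
      (∀ i : Fin m, multisetNormInf (B i) ≤
        multisetNormInf (Seq ⟨0, Nat.lt_of_le_of_lt (Nat.zero_le N) hL⟩) + 2 * i) →
      m ≤ N)
    (hgrow : ∀ (i : ℕ) (h : i + 1 < L),
      multisetNormInf (Seq ⟨i + 1, h⟩) ≤ multisetNormInf (Seq ⟨i, Nat.lt_of_succ_lt h⟩) + 2) :
    ∃ i j : Fin L, i < j ∧ Seq i ≤ Seq j := by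
  by_contra hcon
  push_neg at hcon
  -- norm growth bound
  have key : ∀ (i : ℕ) (h : i < L),
      multisetNormInf (Seq ⟨i, h⟩) ≤
        multisetNormInf (Seq ⟨0, Nat.lt_of_le_of_lt (Nat.zero_le N) hL⟩) + 2 * i := by
    intro i
    induction i with
    | zero => intro h; simp
    | succ k ih =>
      intro h
      have := hgrow k h
      have hk := ih (Nat.lt_of_succ_lt h)
      calc multisetNormInf (Seq ⟨k + 1, h⟩)
          ≤ multisetNormInf (Seq ⟨k, Nat.lt_of_succ_lt h⟩) + 2 := this
        _ ≤ multisetNormInf (Seq ⟨0, Nat.lt_of_le_of_lt (Nat.zero_le N) hL⟩) + 2 * k + 2 := by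
            omega
        _ = multisetNormInf (Seq ⟨0, Nat.lt_of_le_of_lt (Nat.zero_le N) hL⟩) + 2 * (k + 1) := by
            ring
  have hm : N + 1 ≤ N := by
    apply hN (N + 1) (fun i => Seq ⟨i, Nat.lt_of_le_of_lt (Nat.lt_succ_iff.mp i.isLt) hL⟩)
    · intro i j hij
      exact hcon _ _ (by simpa using hij)
    · intro i
      exact key i _
  omega
end
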